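/- arXiv:1512.05384 — 7 statements merged into one kernel-verified Lean document; each statement's English description precedes it below -/
import Mathlib

section
/- An n×n complex matrix A is a product of two positive semidefinite matrices if and only if A is similar to a diagonal matrix with nonnegative diagonal entries. -/
open scoped ComplexOrder Matrix

open Matrix Module

open scoped MatrixOrder

section Aux

variable {n : ℕ}

private lemma ker_pow_aux {V : Type*} [AddCommGroup V] [Module ℂ V] (f : Module.End ℂ V)
    (h : ∀ v, f (f v) = 0 → f v = 0) :
    ∀ (k : ℕ) (v : V), (f ^ (k + 1)) v = 0 → f v = 0 := by
  intro k
  induction k with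
  | zero => intro v hv; simpa using hv
  | succ k ih =>
    intro v hv
    have h1 : (f ^ (k + 1)) (f v) = 0 := by
      rw [← Module.End.mul_apply, ← pow_succ]
      exact hv
    exact h v (ih (f v) h1)

private lemma herm_step {G : Matrix (Fin n) (Fin n) ℂ} (hG : G.IsHermitian)
    (v : Fin n → ℂ) (h : G *ᵥ (G *ᵥ v) = 0) : G *ᵥ v = 0 := by
  rw [← dotProduct_star_self_eq_zero]
  calc star (G *ᵥ v) ⬝ᵥ (G *ᵥ v) = (star v) ᵥ* Gᴴ ⬝ᵥ (G *ᵥ v) := by rw [star_mulVec]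
    _ = star v ⬝ᵥ Gᴴ *ᵥ (G *ᵥ v) := (dotProduct_mulVec _ _ _).symm
    _ = 0 := by rw [hG.eq, h, dotProduct_zero]

private lemma kerA {P Q : Matrix (Fin n) (Fin n) ℂ} (hP : P.PosSemidef) (hQ : Q.PosSemidef)
    (x : Fin n → ℂ) (h : (P * Q) *ᵥ ((P * Q) *ᵥ x) = 0) : (P * Q) *ᵥ x = 0 := by
  have h' : P *ᵥ (Q *ᵥ (P *ᵥ (Q *ᵥ x))) = 0 := by
    simpa only [mulVec_mulVec, Matrix.mul_assoc] using h
  have h1 : star (P *ᵥ (Q *ᵥ x)) ⬝ᵥ Q *ᵥ (P *ᵥ (Q *ᵥ x)) = 0 := by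
    calc star (P *ᵥ (Q *ᵥ x)) ⬝ᵥ Q *ᵥ (P *ᵥ (Q *ᵥ x))
        = (star (Q *ᵥ x)) ᵥ* Pᴴ ⬝ᵥ Q *ᵥ (P *ᵥ (Q *ᵥ x)) := by rw [star_mulVec]
      _ = star (Q *ᵥ x) ⬝ᵥ Pᴴ *ᵥ (Q *ᵥ (P *ᵥ (Q *ᵥ x))) := (dotProduct_mulVec _ _ _).symm
      _ = 0 := by rw [hP.1.eq, h', dotProduct_zero]
  have h2 : Q *ᵥ (P *ᵥ (Q *ᵥ x)) = 0 := (hQ.dotProduct_mulVec_zero_iff _).mp h1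
  have h3 : star (Q *ᵥ x) ⬝ᵥ P *ᵥ (Q *ᵥ x) = 0 := by
    calc star (Q *ᵥ x) ⬝ᵥ P *ᵥ (Q *ᵥ x)
        = (star x) ᵥ* Qᴴ ⬝ᵥ P *ᵥ (Q *ᵥ x) := by rw [star_mulVec]
      _ = star x ⬝ᵥ Qᴴ *ᵥ (P *ᵥ (Q *ᵥ x)) := (dotProduct_mulVec _ _ _).symm
      _ = 0 := by rw [hQ.1.eq, h2, dotProduct_zero]
  have h4 : P *ᵥ (Q *ᵥ x) = 0 := (hP.dotProduct_mulVec_zero_iff _).mp h3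
  rw [← mulVec_mulVec]
  exact h4

private lemma eig_real {P Q : Matrix (Fin n) (Fin n) ℂ} (hP : P.PosSemidef) (hQ : Q.PosSemidef)
    {μ : ℂ} {v : Fin n → ℂ} (hv : v ≠ 0) (hev : (P * Q) *ᵥ v = μ • v) :
    ∃ r : ℝ, 0 ≤ r ∧ μ = (r : ℂ) := by
  by_cases hμ : μ = 0
  · exact ⟨0, le_rfl, by simp [hμ]⟩
  have hRR : (CFC.sqrt P) * ((CFC.sqrt P) * Q) = P * Q := by rw [← Matrix.mul_assoc, CFC.sqrt_mul_sqrt_self P hP.nonneg]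
  have hM : (((CFC.sqrt P) * Q) * (CFC.sqrt P)).PosSemidef := by
    have h := hQ.conjTranspose_mul_mul_same (CFC.sqrt P)
    rwa [(CFC.sqrt_nonneg P).posSemidef.1] at h
  set R := (CFC.sqrt P) with hRdef
  set w := (R * Q) *ᵥ v with hw
  have hwv : R *ᵥ w = μ • v := by rw [hw, mulVec_mulVec, hRR, hev]
  have hw0 : w ≠ 0 := by
    intro h0
    rw [h0, mulVec_zero] at hwv
    rcases smul_eq_zero.mp hwv.symm with h | h
    · exact hμ h
    · exact hv h
  have hMw : ((R * Q) * R) *ᵥ w = μ • w := by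
    rw [hw, ← mulVec_mulVec, hwv, mulVec_smul]
  have hc : 0 < star w ⬝ᵥ w := dotProduct_star_self_pos_iff.mpr hw0
  have hq : 0 ≤ star w ⬝ᵥ ((R * Q) * R) *ᵥ w := hM.dotProduct_mulVec_nonneg w
  have hqc : star w ⬝ᵥ ((R * Q) * R) *ᵥ w = μ * (star w ⬝ᵥ w) := by
    rw [hMw, dotProduct_smul, smul_eq_mul]
  set c := star w ⬝ᵥ w
  set q := star w ⬝ᵥ ((R * Q) * R) *ᵥ w
  have hcre : 0 < c.re ∧ 0 = c.im := Complex.lt_def.mp hc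
  have hqre : 0 ≤ q.re ∧ 0 = q.im := Complex.le_def.mp hq
  refine ⟨q.re / c.re, div_nonneg hqre.1 hcre.1.le, ?_⟩
  have hc0 : c ≠ 0 := ne_of_gt hc
  have hcr : c = (c.re : ℂ) := Complex.ext (by simp) (by simp [← hcre.2])
  have hqr : q = (q.re : ℂ) := Complex.ext (by simp) (by simp [← hqre.2])
  have hμqc : μ = q / c := by rw [hqc, mul_div_cancel_right₀ _ hc0]
  rw [hμqc, Complex.ofReal_div, ← hqr, ← hcr]

private lemma maxgen_le_eig {P Q : Matrix (Fin n) (Fin n) ℂ} (hP : P.PosSemidef)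
    (hQ : Q.PosSemidef) (μ : ℂ) :
    Module.End.maxGenEigenspace ((P * Q).mulVecLin) μ ≤ Module.End.eigenspace ((P * Q).mulVecLin) μ := by
  classical
  intro v hv
  set f : Module.End ℂ (Fin n → ℂ) := (P * Q).mulVecLin with hf
  obtain ⟨k, hk⟩ := (Module.End.mem_maxGenEigenspace f μ v).mp hv
  rcases Nat.eq_zero_or_pos k with hk0 | hkpos
  · subst hk0
    simp only [pow_zero, Module.End.one_apply] at hk
    subst hk
    exact Submodule.zero_mem _
  obtain ⟨k', rfl⟩ : ∃ k', k = k' + 1 := ⟨k - 1, (Nat.succ_pred_eq_of_pos hkpos).symm⟩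
  rw [Module.End.mem_eigenspace_iff]
  by_cases hμ : μ = 0
  · subst hμ
    simp only [zero_smul, sub_zero] at hk ⊢
    refine ker_pow_aux f ?_ k' v hk
    intro u hu
    simp only [hf, Matrix.mulVecLin_apply] at hu ⊢
    exact kerA hP hQ u hu
  by_cases hv0 : v = 0
  · simp [hv0]
  -- μ is a nonnegative real number
  have hvmem : v ∈ f.genEigenspace μ (k' + 1 : ℕ) :=
    Module.End.mem_genEigenspace_nat.mpr hk
  have hgen : f.HasGenEigenvalue μ (k' + 1) := by
    intro hbot
    rw [hbot] at hvmem
    exact hv0 (by simpa using hvmem)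
  obtain ⟨v₀, hv₀⟩ := (Module.End.hasEigenvalue_of_hasGenEigenvalue hgen).exists_hasEigenvector
  obtain ⟨r, hr0, hrμ⟩ : ∃ r : ℝ, 0 ≤ r ∧ μ = (r : ℂ) := by
    refine eig_real hP hQ hv₀.2 ?_
    simpa only [hf, Matrix.mulVecLin_apply] using hv₀.apply_eq_smul
  -- the square-root setup
  have hRR : (CFC.sqrt P) * ((CFC.sqrt P) * Q) = P * Q := by rw [← Matrix.mul_assoc, CFC.sqrt_mul_sqrt_self P hP.nonneg]
  have hMps : (((CFC.sqrt P) * Q) * (CFC.sqrt P)).PosSemidef := by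
    have h := hQ.conjTranspose_mul_mul_same (CFC.sqrt P)
    rwa [(CFC.sqrt_nonneg P).posSemidef.1] at h
  set R := (CFC.sqrt P) with hRdef
  set x : Module.End ℂ (Fin n → ℂ) := R.mulVecLin with hx
  set c : Module.End ℂ (Fin n → ℂ) := (R * Q).mulVecLin with hcdef
  set m : Module.End ℂ (Fin n → ℂ) := ((R * Q) * R).mulVecLin with hm
  have hfxc : f = x * c := by
    rw [hf, hx, hcdef, ← hRR, Matrix.mulVecLin_mul]; rfl
  have hmcx : m = c * x := by rw [hm, hcdef, hx, Matrix.mulVecLin_mul]; rfl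
  have hsemi : SemiconjBy c (f - μ • 1) (m - μ • 1) := by
    rw [SemiconjBy, mul_sub, sub_mul, hfxc, hmcx, ← mul_assoc, mul_smul_comm, smul_mul_assoc,
      mul_one, one_mul]
  have hsemik := (hsemi.pow_right (k' + 1)).eq
  have hcv : ((m - μ • 1) ^ (k' + 1)) (c v) = 0 := by
    have h5 := congrArg (fun (g : Module.End ℂ (Fin n → ℂ)) => g v) hsemik
    simp only [Module.End.mul_apply] at h5
    rw [← h5, hk, map_zero]
  -- Hermitian kernel-stabilisation for m - μ • 1
  have hGstep : ∀ u, (m - μ • 1) ((m - μ • 1) u) = 0 → (m - μ • 1) u = 0 := by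
    set G : Matrix (Fin n) (Fin n) ℂ := (R * Q) * R - (r : ℂ) • 1 with hG
    have hGh : G.IsHermitian := by
      rw [hG, Matrix.IsHermitian, Matrix.conjTranspose_sub, Matrix.conjTranspose_smul,
        Matrix.conjTranspose_one, hMps.1.eq, Complex.star_def, Complex.conj_ofReal]
    have hgm : ∀ u, (m - μ • 1) u = G *ᵥ u := by
      intro u
      rw [LinearMap.sub_apply, LinearMap.smul_apply, Module.End.one_apply, hm,
        Matrix.mulVecLin_apply, hG, Matrix.sub_mulVec, Matrix.smul_mulVec,
        Matrix.one_mulVec, hrμ]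
    intro u hu
    rw [hgm, hgm] at hu
    rw [hgm]
    exact herm_step hGh u hu
  have hgcv : (m - μ • 1) (c v) = 0 := ker_pow_aux (m - μ • 1) hGstep k' (c v) hcv
  -- transfer back to f
  have hcfv : c ((f - μ • 1) v) = 0 := by
    have h6 := congrArg (fun (g : Module.End ℂ (Fin n → ℂ)) => g v) hsemi.eq
    simp only [Module.End.mul_apply] at h6
    rw [h6]; exact hgcv
  set u : Fin n → ℂ := (f - μ • 1) v with hudef
  have hfu : f u = 0 := by rw [hfxc, Module.End.mul_apply, hcfv, map_zero]
  have hstep : (f - μ • 1) u = (-μ) • u := by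
    rw [LinearMap.sub_apply, LinearMap.smul_apply, Module.End.one_apply, hfu, zero_sub, neg_smul]
  have hpowu : ∀ j : ℕ, ((f - μ • 1) ^ j) u = (-μ) ^ j • u := by
    intro j
    induction j with
    | zero => simp
    | succ j ih =>
      rw [pow_succ', Module.End.mul_apply, ih, LinearMap.map_smul, hstep, smul_smul, ← pow_succ]
  have hu0 : u = 0 := by
    have h1 : ((f - μ • 1) ^ k') u = 0 := by
      rw [hudef, ← Module.End.mul_apply, ← pow_succ]
      exact hk
    rw [hpowu k'] at h1
    rcases smul_eq_zero.mp h1 with h | h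
    · exact absurd h (pow_ne_zero _ (neg_ne_zero.mpr hμ))
    · exact h
  rw [hudef] at hu0
  have h7 : f v - μ • v = 0 := by simpa using hu0
  exact sub_eq_zero.mp h7

end Aux

/-- A ∈ M_n(ℂ) is a product of two positive semidefinite matrices iff
A is similar to a diagonal matrix with nonnegative diagonal entries. -/
theorem stmt0 (n : ℕ) (A : Matrix (Fin n) (Fin n) ℂ) :
    (∃ P Q : Matrix (Fin n) (Fin n) ℂ, P.PosSemidef ∧ Q.PosSemidef ∧ A = P * Q) ↔
    (∃ S : Matrix (Fin n) (Fin n) ℂ, IsUnit S ∧ ∃ d : Fin n → ℝ, (∀ i, 0 ≤ d i) ∧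
      A = S * Matrix.diagonal (fun i => (d i : ℂ)) * S⁻¹) := by
  constructor
  · rintro ⟨P, Q, hP, hQ, rfl⟩
    classical
    set f : Module.End ℂ (Fin n → ℂ) := (P * Q).mulVecLin with hf
    have htop : (⊤ : Submodule ℂ (Fin n → ℂ)) ≤ ⨆ μ : ℂ, Module.End.eigenspace f μ := by
      rw [← Module.End.iSup_maxGenEigenspace_eq_top f]
      exact iSup_mono fun μ => maxgen_le_eig hP hQ μ
    set s : Set (Fin n → ℂ) := ⋃ μ : ℂ, (Module.End.eigenspace f μ : Set (Fin n → ℂ)) with hs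
    have hspan : Submodule.span ℂ s = ⊤ := by
      refine top_unique (le_trans htop ?_)
      rw [hs, Submodule.iSup_eq_span]
    obtain ⟨b, hbs, hbsp, hbli⟩ := exists_linearIndependent ℂ s
    have hbfin : b.Finite := hbli.setFinite
    haveI := hbfin.fintype
    let B : Basis b ℂ (Fin n → ℂ) := Basis.mk hbli
      (by rw [Subtype.range_coe, hbsp, hspan])
    let e : Fin n ≃ b := Basis.indexEquiv (Pi.basisFun ℂ (Fin n)) B
    let bb : Basis (Fin n) ℂ (Fin n → ℂ) := B.reindex e.symm
    have hbbmem : ∀ j, bb j ∈ s := fun j => by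
      have h1 : bb j = ((e j : b) : Fin n → ℂ) := by
        simp only [bb, Basis.reindex_apply, Equiv.symm_symm, B, Basis.mk_apply]
      rw [h1]
      exact hbs (e j).2
    have hμs : ∀ j, ∃ μ : ℂ, f (bb j) = μ • bb j := by
      intro j
      obtain ⟨μ, hmem⟩ := Set.mem_iUnion.mp (hbbmem j)
      exact ⟨μ, Module.End.mem_eigenspace_iff.mp hmem⟩
    choose μs hμs using hμs
    have hne : ∀ j, bb j ≠ 0 := fun j => bb.ne_zero j
    have hrs : ∀ j, ∃ r : ℝ, 0 ≤ r ∧ μs j = (r : ℂ) := fun j =>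
      eig_real hP hQ (hne j) (by simpa [hf, Matrix.mulVecLin_apply] using hμs j)
    choose rs hrs0 hrsμ using hrs
    set S : Matrix (Fin n) (Fin n) ℂ := Matrix.of (fun i j => bb j i) with hS
    have hStm : S = (Pi.basisFun ℂ (Fin n)).toMatrix bb := by
      ext i j
      simp [hS, Basis.toMatrix_apply, Pi.basisFun_repr]
    have hSunit : IsUnit S := by
      rw [hStm]
      letI := Basis.invertibleToMatrix (Pi.basisFun ℂ (Fin n)) bb
      exact isUnit_of_invertible _
    refine ⟨S, hSunit, rs, hrs0, ?_⟩
    have hAS : (P * Q) * S = S * Matrix.diagonal (fun j => (rs j : ℂ)) := by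
      ext i j
      have h1 : ((P * Q) * S) i j = ((P * Q) *ᵥ (bb j)) i := by
        simp [Matrix.mul_apply, Matrix.mulVec, dotProduct, hS]
      have h2 : (P * Q) *ᵥ bb j = μs j • bb j := by
        simpa [hf, Matrix.mulVecLin_apply] using hμs j
      rw [h1, h2, Matrix.mul_diagonal]
      simp [hS, hrsμ j, mul_comm]
    have hdet : IsUnit S.det := (Matrix.isUnit_iff_isUnit_det S).mp hSunit
    calc P * Q = (P * Q) * (S * S⁻¹) := by rw [Matrix.mul_nonsing_inv S hdet, Matrix.mul_one]
      _ = ((P * Q) * S) * S⁻¹ := by simp only [Matrix.mul_assoc]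
      _ = S * Matrix.diagonal (fun j => (rs j : ℂ)) * S⁻¹ := by rw [hAS]
  · rintro ⟨S, hS, d, hd, rfl⟩
    have hdet : IsUnit S.det := (Matrix.isUnit_iff_isUnit_det S).mp hS
    have hdiag : (Matrix.diagonal (fun i => (d i : ℂ))).PosSemidef :=
      Matrix.PosSemidef.diagonal (fun i => Complex.zero_le_real.mpr (hd i))
    refine ⟨S * Sᴴ, (S⁻¹)ᴴ * Matrix.diagonal (fun i => (d i : ℂ)) * S⁻¹,
      Matrix.posSemidef_self_mul_conjTranspose S,
      hdiag.conjTranspose_mul_mul_same S⁻¹, ?_⟩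
    have h1 : Sᴴ * (S⁻¹)ᴴ = 1 := by
      rw [← Matrix.conjTranspose_mul, Matrix.nonsing_inv_mul S hdet, Matrix.conjTranspose_one]
    symm
    calc S * Sᴴ * ((S⁻¹)ᴴ * Matrix.diagonal (fun i => (d i : ℂ)) * S⁻¹)
        = S * ((Sᴴ * (S⁻¹)ᴴ) * (Matrix.diagonal (fun i => (d i : ℂ)) * S⁻¹)) := by
          simp only [Matrix.mul_assoc]
      _ = S * (Matrix.diagonal (fun i => (d i : ℂ)) * S⁻¹) := by rw [h1, Matrix.one_mul]
      _ = S * Matrix.diagonal (fun i => (d i : ℂ)) * S⁻¹ := by rw [Matrix.mul_assoc]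
end

section
/- The matrix A = (1/25)·[[9, 3],[0, 16]] is a contraction similar to diag(9/25, 16/25) but is not the product of two positive semidefinite contractions. -/
open scoped ComplexOrder Matrix

open scoped Matrix.Norms.L2Operator

lemma stmt3_core (p0 p1 q0 q1 : ℝ)
    (hp0 : 0 ≤ p0) (hp0' : p0 ≤ 1) (hp1 : 0 ≤ p1) (hp1' : p1 ≤ 1)
    (hq0 : 0 ≤ q0) (hq0' : q0 ≤ 1) (hq1 : 0 ≤ q1) (hq1' : q1 ≤ 1)
    (e1 : q0 * (49 * p0 - 9 * p1) = 441 / 25)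
    (e2 : 49 * p1 * q1 - 9 * p1 * q0 = 784 / 25)
    (i1 : 9 * p1 ^ 2 / 49 ≤ (1 - p0) * (1 - p1))
    (i2 : 9 * q0 ^ 2 / 49 ≤ (1 - q0) * (1 - q1)) : False := by
  nlinarith [mul_nonneg hp1 hq0, mul_nonneg hp0 hq0, sq_nonneg (p0 - p1), sq_nonneg (q0 - q1), mul_nonneg (mul_nonneg hp1 hq0) hq0, mul_nonneg (mul_nonneg hp0 hp1) hq0, sq_nonneg (p1*q0 - p0*q0), mul_nonneg (sub_nonneg.2 hq0') (sub_nonneg.2 hq1'), mul_nonneg (sub_nonneg.2 hp0') (sub_nonneg.2 hp1')]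

lemma stmt3_norm_le : ‖((1 / 25 : ℂ) • !![9, 3; 0, 16] : Matrix (Fin 2) (Fin 2) ℂ)‖ ≤ 1 := by
  rw [Matrix.l2_opNorm_def]
  apply ContinuousLinearMap.opNorm_le_bound _ zero_le_one
  intro x
  rw [one_mul]
  simp only [LinearEquiv.trans_apply, LinearMap.coe_toContinuousLinearMap']
  rw [show ((Matrix.toEuclideanLin ((1 / 25 : ℂ) • !![9, 3; 0, 16])) x) =
    (WithLp.equiv 2 _).symm (((1 / 25 : ℂ) • !![9, 3; 0, 16]) *ᵥ (WithLp.equiv 2 _ x)) from rfl]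
  rw [EuclideanSpace.norm_eq, EuclideanSpace.norm_eq]
  apply Real.sqrt_le_sqrt
  simp [Fin.sum_univ_two, Matrix.mulVec, dotProduct]
  have h0 : ‖(25⁻¹ * 9 * x 0 + 25⁻¹ * 3 * x 1)‖
      ≤ 9/25 * ‖(x 0)‖ + 3/25 * ‖(x 1)‖ := by
    refine (norm_add_le _ _).trans ?_
    simp [map_mul]
    norm_num
  have h1 : (0:ℝ) ≤ ‖(x 0)‖ := norm_nonneg _
  have h2 : (0:ℝ) ≤ ‖(x 1)‖ := norm_nonneg _
  have h3 : (0:ℝ) ≤ ‖(25⁻¹ * 9 * x 0 + 25⁻¹ * 3 * x 1)‖ := norm_nonneg _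
  nlinarith [sq_nonneg (‖(x 0)‖ - ‖(x 1)‖), h0, h1, h2, h3]

lemma stmt3_similar : ∃ S : Matrix (Fin 2) (Fin 2) ℂ, IsUnit S ∧
    (1 / 25 : ℂ) • !![9, 3; 0, 16] = S * Matrix.diagonal ![(9 / 25 : ℂ), (16 / 25 : ℂ)] * S⁻¹ := by
  have hdet : (!![1, 3; 0, 7] : Matrix (Fin 2) (Fin 2) ℂ).det = 7 := by
    simp [Matrix.det_fin_two]
  have hu : IsUnit (!![1, 3; 0, 7] : Matrix (Fin 2) (Fin 2) ℂ).det := by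
    rw [hdet]; exact isUnit_iff_ne_zero.mpr (by norm_num)
  have hSS : (!![1, 3; 0, 7] : Matrix (Fin 2) (Fin 2) ℂ) * (!![1, 3; 0, 7])⁻¹ = 1 :=
    Matrix.mul_nonsing_inv _ hu
  have key : ((1 / 25 : ℂ) • !![9, 3; 0, 16]) * (!![1, 3; 0, 7] : Matrix (Fin 2) (Fin 2) ℂ)
      = (!![1, 3; 0, 7] : Matrix (Fin 2) (Fin 2) ℂ) *
        Matrix.diagonal ![(9 / 25 : ℂ), (16 / 25 : ℂ)] := by
    ext i j
    fin_cases i <;> fin_cases j <;>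
      simp [Matrix.mul_apply, Fin.sum_univ_two, Matrix.diagonal] <;> ring
  refine ⟨!![1, 3; 0, 7], (Matrix.isUnit_iff_isUnit_det _).mpr hu, ?_⟩
  rw [← key, mul_assoc, hSS, mul_one]

lemma psd_det_nonneg {n : Type*} [Fintype n] [DecidableEq n] {M : Matrix n n ℂ}
    (hM : M.PosSemidef) : 0 ≤ M.det := by
  exact hM.det_nonneg

lemma one_sub_psd {n : Type*} [Fintype n] [DecidableEq n] {M : Matrix n n ℂ}
    (hM : M.PosSemidef) (hn : ‖M‖ ≤ 1) : (1 - M).PosSemidef := by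
  refine Matrix.PosSemidef.of_dotProduct_mulVec_nonneg ?_ ?_
  · have h := hM.1
    simp only [Matrix.IsHermitian, Matrix.conjTranspose_sub, Matrix.conjTranspose_one] at *
    rw [h]
  · intro x
    set y : EuclideanSpace ℂ n := (WithLp.equiv 2 _).symm x with hy
    have hs0 : 0 ≤ dotProduct (star x) (M *ᵥ x) := hM.dotProduct_mulVec_nonneg x
    have hsinner : dotProduct (star x) (M *ᵥ x)
        = inner ℂ y ((WithLp.equiv 2 (n → ℂ)).symm (M *ᵥ x)) :=
      ((EuclideanSpace.inner_toLp_toLp x (M *ᵥ x)).trans (dotProduct_comm _ _)).symm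
    have hnormle : ‖(WithLp.equiv 2 (n → ℂ)).symm (M *ᵥ x)‖ ≤ ‖M‖ * ‖y‖ :=
      M.l2_opNorm_mulVec y
    have habs : ‖(inner ℂ y ((WithLp.equiv 2 (n → ℂ)).symm (M *ᵥ x)) : ℂ)‖
        ≤ ‖y‖ * (‖M‖ * ‖y‖) :=
      (norm_inner_le_norm _ _).trans (by
        have : (0:ℝ) ≤ ‖y‖ := norm_nonneg _
        nlinarith [hnormle, norm_nonneg ((WithLp.equiv 2 (n → ℂ)).symm (M *ᵥ x))])
    have hsre : (dotProduct (star x) (M *ᵥ x)).re ≤ ‖y‖ ^ 2 := by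
      rw [hsinner]
      calc (inner ℂ y ((WithLp.equiv 2 (n → ℂ)).symm (M *ᵥ x)) : ℂ).re
          ≤ ‖(inner ℂ y ((WithLp.equiv 2 (n → ℂ)).symm (M *ᵥ x)) : ℂ)‖ := Complex.re_le_norm _
        _ ≤ ‖y‖ * (‖M‖ * ‖y‖) := habs
        _ ≤ ‖y‖ ^ 2 := by nlinarith [norm_nonneg y]
    have ht : dotProduct (star x) x = (‖y‖ : ℂ) ^ 2 := by
      rw [show dotProduct (star x) x = (inner ℂ y y : ℂ) from
        ((EuclideanSpace.inner_toLp_toLp x x).trans (dotProduct_comm _ _)).symm]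
      exact inner_self_eq_norm_sq_to_K y
    have hsub : (1 - M) *ᵥ x = x - M *ᵥ x := by
      rw [Matrix.sub_mulVec, Matrix.one_mulVec]
    rw [hsub, dotProduct_sub, ht]
    rw [Complex.le_def] at hs0 ⊢
    constructor
    · simp only [Complex.sub_re, Complex.zero_re]
      have : ((‖y‖:ℂ) ^ 2).re = ‖y‖ ^ 2 := by
        norm_cast
      rw [this]
      linarith [hsre]
    · simp only [Complex.sub_im, Complex.zero_im]
      have : ((‖y‖:ℂ) ^ 2).im = 0 := by norm_cast
      rw [this]
      simp only [Complex.zero_im] at hs0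
      linarith [hs0.2]

lemma psd_diag_nonneg {M : Matrix (Fin 2) (Fin 2) ℂ} (hM : M.PosSemidef) (i : Fin 2) :
    0 ≤ M i i := by
  have h := hM.dotProduct_mulVec_nonneg (Pi.single i 1)
  simpa [dotProduct, Matrix.mulVec, Fin.sum_univ_two, Pi.single_apply] using h

lemma stmt3_main (P Q : Matrix (Fin 2) (Fin 2) ℂ) (hP : P.PosSemidef) (hQ : Q.PosSemidef)
    (hA : (1 / 25 : ℂ) • !![9, 3; 0, 16] = P * Q)
    (hP1 : (1 - P).PosSemidef) (hQ1 : (1 - Q).PosSemidef) : False := by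
  set A : Matrix (Fin 2) (Fin 2) ℂ := (1 / 25 : ℂ) • !![9, 3; 0, 16] with hAdef
  have hAadj : Aᴴ = Q * P := by
    rw [hA, Matrix.conjTranspose_mul, hP.1, hQ.1]
  have h1 : A * P = P * Aᴴ := by rw [hAadj, hA, mul_assoc]
  have h2 : Aᴴ * Q = Q * A := by rw [hAadj, hA, mul_assoc]
  have hP10 : P 1 0 = star (P 0 1) := by
    have := congrFun (congrFun hP.1 1) 0
    simpa [Matrix.conjTranspose_apply] using this.symm
  have hA00 : A 0 0 = 9 / 25 := by norm_num [hAdef]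
  have hA01 : A 0 1 = 3 / 25 := by norm_num [hAdef]
  have hA10 : A 1 0 = 0 := by norm_num [hAdef]
  have hA11 : A 1 1 = 16 / 25 := by norm_num [hAdef]
  have hAH00 : Aᴴ 0 0 = 9 / 25 := by norm_num [hAdef, Matrix.conjTranspose_apply]
  have hAH01 : Aᴴ 0 1 = 0 := by norm_num [hAdef, Matrix.conjTranspose_apply]
  have hAH10 : Aᴴ 1 0 = 3 / 25 := by norm_num [hAdef, Matrix.conjTranspose_apply]
  have hAH11 : Aᴴ 1 1 = 16 / 25 := by norm_num [hAdef, Matrix.conjTranspose_apply]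
  have h1_00 : A 0 0 * P 0 0 + A 0 1 * P 1 0 = P 0 0 * Aᴴ 0 0 + P 0 1 * Aᴴ 1 0 := by
    have := congrFun (congrFun h1 0) 0
    simpa [Matrix.mul_apply, Fin.sum_univ_two] using this
  have h1_01 : A 0 0 * P 0 1 + A 0 1 * P 1 1 = P 0 0 * Aᴴ 0 1 + P 0 1 * Aᴴ 1 1 := by
    have := congrFun (congrFun h1 0) 1
    simpa [Matrix.mul_apply, Fin.sum_univ_two] using this
  rw [hA00, hA01, hAH00, hAH10] at h1_00
  rw [hA00, hA01, hAH01, hAH11] at h1_01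
  have hPsym : P 1 0 = P 0 1 := by linear_combination (25/3 : ℂ) * h1_00
  have hP01 : 3 * P 1 1 = 7 * P 0 1 := by linear_combination (25 : ℂ) * h1_01
  have h2_01 : Aᴴ 0 0 * Q 0 1 + Aᴴ 0 1 * Q 1 1 = Q 0 0 * A 0 1 + Q 0 1 * A 1 1 := by
    have := congrFun (congrFun h2 0) 1
    simpa [Matrix.mul_apply, Fin.sum_univ_two] using this
  have h2_10 : Aᴴ 1 0 * Q 0 0 + Aᴴ 1 1 * Q 1 0 = Q 1 0 * A 0 0 + Q 1 1 * A 1 0 := by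
    have := congrFun (congrFun h2 1) 0
    simpa [Matrix.mul_apply, Fin.sum_univ_two] using this
  rw [hAH00, hAH01, hA01, hA11] at h2_01
  rw [hAH10, hAH11, hA00, hA10] at h2_10
  have hQ01 : 3 * Q 0 0 + 7 * Q 0 1 = 0 := by linear_combination (-25 : ℂ) * h2_01
  have hQsym : Q 1 0 = Q 0 1 := by
    linear_combination (25/7 : ℂ) * h2_10 - (1/7 : ℂ) * hQ01
  -- all entries are real
  have hPb : P 0 1 = ((P 0 1).re : ℂ) := by
    have h := hPsym; rw [hP10] at h
    exact (Complex.conj_eq_iff_re.mp h).symm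
  have hQb : Q 0 1 = ((Q 0 1).re : ℂ) := by
    have hQ10 : Q 1 0 = star (Q 0 1) := by
      have := congrFun (congrFun hQ.1 1) 0
      simpa [Matrix.conjTranspose_apply] using this.symm
    have h := hQsym; rw [hQ10] at h
    exact (Complex.conj_eq_iff_re.mp h).symm
  have hPd0 : P 0 0 = ((P 0 0).re : ℂ) := by
    have h := congrFun (congrFun hP.1 0) 0
    rw [Matrix.conjTranspose_apply] at h
    exact (Complex.conj_eq_iff_re.mp h).symm
  have hPd1 : P 1 1 = ((P 1 1).re : ℂ) := by
    have h := congrFun (congrFun hP.1 1) 1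
    rw [Matrix.conjTranspose_apply] at h
    exact (Complex.conj_eq_iff_re.mp h).symm
  have hQd0 : Q 0 0 = ((Q 0 0).re : ℂ) := by
    have h := congrFun (congrFun hQ.1 0) 0
    rw [Matrix.conjTranspose_apply] at h
    exact (Complex.conj_eq_iff_re.mp h).symm
  have hQd1 : Q 1 1 = ((Q 1 1).re : ℂ) := by
    have h := congrFun (congrFun hQ.1 1) 1
    rw [Matrix.conjTranspose_apply] at h
    exact (Complex.conj_eq_iff_re.mp h).symm
  set p0 := (P 0 0).re
  set p1 := (P 1 1).re
  set q0 := (Q 0 0).re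
  set q1 := (Q 1 1).re
  set pb := (P 0 1).re
  set qb := (Q 0 1).re
  have hpb : 3 * p1 = 7 * pb := by
    have h := hP01
    rw [hPd1, hPb] at h
    exact_mod_cast h
  have hqb : 3 * q0 + 7 * qb = 0 := by
    have h := hQ01
    rw [hQd0, hQb] at h
    exact_mod_cast h
  -- product entry equations
  have e00 : p0 * q0 + pb * qb = 9 / 25 := by
    have hPQ : (P * Q) 0 0 = P 0 0 * Q 0 0 + P 0 1 * Q 1 0 := by
      simp [Matrix.mul_apply, Fin.sum_univ_two]
    have h := congrFun (congrFun hA 0) 0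
    rw [hA00, hPQ, hQsym, hPd0, hQd0, hPb, hQb] at h
    rw [show (9/25 : ℂ) = ((9/25 : ℝ) : ℂ) by norm_num] at h
    exact_mod_cast h.symm
  have e11 : pb * qb + p1 * q1 = 16 / 25 := by
    have hPQ : (P * Q) 1 1 = P 1 0 * Q 0 1 + P 1 1 * Q 1 1 := by
      simp [Matrix.mul_apply, Fin.sum_univ_two]
    have h := congrFun (congrFun hA 1) 1
    rw [hA11, hPQ, hPsym, hPd1, hPb, hQb, hQd1] at h
    rw [show (16/25 : ℂ) = ((16/25 : ℝ) : ℂ) by norm_num] at h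
    exact_mod_cast h.symm
  -- bounds
  have hp0 : 0 ≤ p0 := by
    have h := psd_diag_nonneg hP 0; rw [hPd0] at h; exact_mod_cast h
  have hp1 : 0 ≤ p1 := by
    have h := psd_diag_nonneg hP 1; rw [hPd1] at h; exact_mod_cast h
  have hq0 : 0 ≤ q0 := by
    have h := psd_diag_nonneg hQ 0; rw [hQd0] at h; exact_mod_cast h
  have hq1 : 0 ≤ q1 := by
    have h := psd_diag_nonneg hQ 1; rw [hQd1] at h; exact_mod_cast h
  have hsub : ∀ (M : Matrix (Fin 2) (Fin 2) ℂ) (i j : Fin 2),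
      (1 - M) i j = (1 : Matrix (Fin 2) (Fin 2) ℂ) i j - M i j := fun M i j => rfl
  have hp0' : p0 ≤ 1 := by
    have h := psd_diag_nonneg hP1 0
    rw [hsub, hPd0] at h
    have h2 : (0:ℂ) ≤ ((1 - p0 : ℝ) : ℂ) := by push_cast; simpa [Matrix.one_apply] using h
    linarith [Complex.zero_le_real.mp h2]
  have hp1' : p1 ≤ 1 := by
    have h := psd_diag_nonneg hP1 1
    rw [hsub, hPd1] at h
    have h2 : (0:ℂ) ≤ ((1 - p1 : ℝ) : ℂ) := by push_cast; simpa [Matrix.one_apply] using h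
    linarith [Complex.zero_le_real.mp h2]
  have hq0' : q0 ≤ 1 := by
    have h := psd_diag_nonneg hQ1 0
    rw [hsub, hQd0] at h
    have h2 : (0:ℂ) ≤ ((1 - q0 : ℝ) : ℂ) := by push_cast; simpa [Matrix.one_apply] using h
    linarith [Complex.zero_le_real.mp h2]
  have hq1' : q1 ≤ 1 := by
    have h := psd_diag_nonneg hQ1 1
    rw [hsub, hQd1] at h
    have h2 : (0:ℂ) ≤ ((1 - q1 : ℝ) : ℂ) := by push_cast; simpa [Matrix.one_apply] using h
    linarith [Complex.zero_le_real.mp h2]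
  -- determinant inequalities
  have i1 : pb * pb ≤ (1 - p0) * (1 - p1) := by
    have h := psd_det_nonneg hP1
    have hdet : (1 - P).det = (((1 - p0) * (1 - p1) - pb * pb : ℝ) : ℂ) := by
      rw [Matrix.det_fin_two, hsub, hsub, hsub, hsub, hPd0, hPd1, hPb, hPsym, hPb]
      simp only [Matrix.one_apply_eq, Matrix.one_apply_ne (by decide : (0:Fin 2) ≠ 1),
        Matrix.one_apply_ne (by decide : (1:Fin 2) ≠ 0)]
      push_cast
      ring
    rw [hdet] at h
    linarith [Complex.zero_le_real.mp h]
  have i2 : qb * qb ≤ (1 - q0) * (1 - q1) := by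
    have h := psd_det_nonneg hQ1
    have hdet : (1 - Q).det = (((1 - q0) * (1 - q1) - qb * qb : ℝ) : ℂ) := by
      rw [Matrix.det_fin_two, hsub, hsub, hsub, hsub, hQd0, hQd1, hQb, hQsym, hQb]
      simp only [Matrix.one_apply_eq, Matrix.one_apply_ne (by decide : (0:Fin 2) ≠ 1),
        Matrix.one_apply_ne (by decide : (1:Fin 2) ≠ 0)]
      push_cast
      ring
    rw [hdet] at h
    linarith [Complex.zero_le_real.mp h]
  -- assemble
  have sqp : 9 * p1 ^ 2 = 49 * (pb * pb) := by linear_combination (3 * p1 + 7 * pb) * hpb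
  have sqq : 9 * q0 ^ 2 = 49 * (qb * qb) := by linear_combination (3 * q0 - 7 * qb) * hqb
  exact stmt3_core p0 p1 q0 q1 hp0 hp0' hp1 hp1' hq0 hq0' hq1 hq1'
    (by linear_combination 49 * e00 + (-3 * q0) * hpb + (-7 * pb) * hqb)
    (by linear_combination 49 * e11 + (-3 * q0) * hpb + (-7 * pb) * hqb)
    (by linarith) (by linarith)

/-- A = (1/25)·[[9,3],[0,16]] is a contraction similar to diag(9/25,16/25) but
is not the product of two positive semidefinite contractions. -/
theorem stmt3 :
    let A : Matrix (Fin 2) (Fin 2) ℂ := (1 / 25 : ℂ) • !![9, 3; 0, 16]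
    ‖A‖ ≤ 1 ∧
    (∃ S : Matrix (Fin 2) (Fin 2) ℂ, IsUnit S ∧
      A = S * Matrix.diagonal ![(9 / 25 : ℂ), (16 / 25 : ℂ)] * S⁻¹) ∧
    ¬ ∃ P Q : Matrix (Fin 2) (Fin 2) ℂ, P.PosSemidef ∧ ‖P‖ ≤ 1 ∧ Q.PosSemidef ∧ ‖Q‖ ≤ 1 ∧
      A = P * Q := by
  refine ⟨stmt3_norm_le, stmt3_similar, ?_⟩
  rintro ⟨P, Q, hP, hPn, hQ, hQn, hA⟩
  exact stmt3_main P Q hP hQ hA (one_sub_psd hP hPn) (one_sub_psd hQ hQn)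
end

section
/- For real numbers a, b ∈ (0,1) with a ≠ b, the maximum of (d₁−1)(d₂−1) over all pairs (d₁,d₂) with d₁ ≥ 1, d₂ ≥ 1, 1 − d₁a ≥ 0, 1 − d₂b ≥ 0, and (d₁−1)(d₂−1) = (1−d₁a)(1−d₂b) equals (1−a)(1−b)/(1+√(ab))². -/
open scoped ComplexOrder Matrix

/-- For a, b ∈ (0,1), a ≠ b, the maximum of (d₁−1)(d₂−1) over d₁,d₂ ≥ 1 with
1−d₁a ≥ 0, 1−d₂b ≥ 0 and (d₁−1)(d₂−1) = (1−d₁a)(1−d₂b) equals (1−a)(1−b)/(1+√(ab))². -/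
theorem stmt5 (a b : ℝ) (ha : a ∈ Set.Ioo (0 : ℝ) 1) (hb : b ∈ Set.Ioo (0 : ℝ) 1)
    (hab : a ≠ b) :
    IsGreatest {x : ℝ | ∃ d₁ d₂ : ℝ, 1 ≤ d₁ ∧ 1 ≤ d₂ ∧ 0 ≤ 1 - d₁ * a ∧ 0 ≤ 1 - d₂ * b ∧
        (d₁ - 1) * (d₂ - 1) = (1 - d₁ * a) * (1 - d₂ * b) ∧ x = (d₁ - 1) * (d₂ - 1)}
      ((1 - a) * (1 - b) / (1 + Real.sqrt (a * b)) ^ 2) := by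
  obtain ⟨ha0, ha1⟩ := ha
  obtain ⟨hb0, hb1⟩ := hb
  set s := Real.sqrt (a * b) with hs_def
  have hs0 : 0 ≤ s := Real.sqrt_nonneg _
  have hs2 : s ^ 2 = a * b := Real.sq_sqrt (by positivity)
  clear_value s
  have hab1 : a * b < 1 := by nlinarith
  have hs1 : s < 1 := by nlinarith [hs2, hs0]
  have h1s : (0:ℝ) < 1 + s := by linarith
  have ha' : a ≠ 0 := ne_of_gt ha0
  have hb' : b ≠ 0 := ne_of_gt hb0
  have h1s' : (1 + s) ≠ 0 := ne_of_gt h1s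
  constructor
  · -- membership
    have e1 : 1 - (1 + (1 - a) * s / (a * (1 + s))) * a = (1 - a) / (1 + s) := by
      field_simp; ring
    have e2 : 1 - (1 + (1 - b) * s / (b * (1 + s))) * b = (1 - b) / (1 + s) := by
      field_simp; ring
    have e3 : 1 + (1 - a) * s / (a * (1 + s)) - 1 = (1 - a) * s / (a * (1 + s)) := by ring
    have e4 : 1 + (1 - b) * s / (b * (1 + s)) - 1 = (1 - b) * s / (b * (1 + s)) := by ring
    refine ⟨1 + (1 - a) * s / (a * (1 + s)), 1 + (1 - b) * s / (b * (1 + s)), ?_, ?_, ?_, ?_, ?_, ?_⟩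
    · have : 0 ≤ (1 - a) * s / (a * (1 + s)) :=
        div_nonneg (mul_nonneg (by linarith) hs0) (le_of_lt (mul_pos ha0 h1s))
      linarith
    · have : 0 ≤ (1 - b) * s / (b * (1 + s)) :=
        div_nonneg (mul_nonneg (by linarith) hs0) (le_of_lt (mul_pos hb0 h1s))
      linarith
    · rw [e1]; exact div_nonneg (by linarith) (le_of_lt h1s)
    · rw [e2]; exact div_nonneg (by linarith) (le_of_lt h1s)
    · rw [e1, e2, e3, e4]
      field_simp
      linear_combination hs2
    · rw [e3, e4]
      field_simp
      linear_combination (-1 : ℝ) * hs2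
  · -- upper bound
    rintro x ⟨d₁, d₂, hd₁, hd₂, hda, hdb, hc, hx⟩
    obtain ⟨u, hu_def⟩ : ∃ u, u = d₁ - 1 := ⟨_, rfl⟩
    obtain ⟨v, hv_def⟩ : ∃ v, v = d₂ - 1 := ⟨_, rfl⟩
    have hu : 0 ≤ u := by rw [hu_def]; linarith
    have hv : 0 ≤ v := by rw [hv_def]; linarith
    obtain ⟨A, hA_def⟩ : ∃ A, A = 1 - a := ⟨_, rfl⟩
    obtain ⟨B, hB_def⟩ : ∃ B, B = 1 - b := ⟨_, rfl⟩
    have hA : 0 < A := by rw [hA_def]; linarith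
    have hB : 0 < B := by rw [hB_def]; linarith
    have hc' : u * v = (A - u * a) * (B - v * b) := by
      rw [hu_def, hv_def, hA_def, hB_def, hc]; ring
    have key : u * v * (1 - a * b) + a * B * u + b * A * v = A * B := by
      linear_combination hc'
    obtain ⟨w, hw0, hw2⟩ : ∃ w, 0 ≤ w ∧ w ^ 2 = u * v :=
      ⟨Real.sqrt (u * v), Real.sqrt_nonneg _, Real.sq_sqrt (mul_nonneg hu hv)⟩
    obtain ⟨r, hr0, hr2⟩ : ∃ r, 0 < r ∧ r ^ 2 = A * B :=
      ⟨Real.sqrt (A * B), Real.sqrt_pos.mpr (mul_pos hA hB),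
        Real.sq_sqrt (le_of_lt (mul_pos hA hB))⟩
    have hX : 0 ≤ a * B * u := by positivity
    have hY : 0 ≤ b * A * v := by positivity
    have hZ2 : (2 * s * r * w) ^ 2 = 4 * (a * B * u) * (b * A * v) := by
      have h : (2 * s * r * w) ^ 2 = 4 * s ^ 2 * r ^ 2 * w ^ 2 := by ring
      rw [h, hs2, hr2, hw2]; ring
    have hsq : (2 * s * r * w) ^ 2 ≤ (a * B * u + b * A * v) ^ 2 := by
      rw [hZ2]; nlinarith [sq_nonneg (a * B * u - b * A * v)]
    have amgm : 2 * s * r * w ≤ a * B * u + b * A * v :=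
      le_of_pow_le_pow_left₀ two_ne_zero (by linarith) hsq
    have step3 : w ^ 2 * (1 - s ^ 2) + 2 * s * r * w ≤ r ^ 2 := by
      rw [hw2, hs2, hr2]; linarith
    have hP : 0 ≤ r - w * (1 + s) := by
      have hw1s : 0 ≤ w * (1 - s) := mul_nonneg hw0 (by linarith)
      have hQ : 0 < r + w * (1 - s) := by linarith
      have hexp : (r + w * (1 - s)) * (r - w * (1 + s)) =
          r ^ 2 - (w ^ 2 * (1 - s ^ 2) + 2 * s * r * w) := by ring
      have hPQ : 0 ≤ (r + w * (1 - s)) * (r - w * (1 + s)) := by rw [hexp]; linarith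
      exact nonneg_of_mul_nonneg_right hPQ hQ
    have hP' : w * (1 + s) ≤ r := by linarith
    have hfin : (w * (1 + s)) ^ 2 ≤ r ^ 2 := pow_le_pow_left₀ (by positivity) hP' 2
    rw [le_div_iff₀ (by positivity)]
    have hxuv : x = u * v := by rw [hx, hu_def, hv_def]
    rw [hxuv, ← hw2, ← hA_def, ← hB_def, ← hr2]
    exact le_of_eq_of_le (by ring) hfin
end

section
/- Suppose A ∈ M_n is similar to I_p ⊕ 0_q ⊕ diag(a₁,…,a_m) with each a_j ∈ (0,1), A is unitarily similar to I_p ⊕ A₁, and there exists an (n−p)×m matrix S of rank m with A₁A₁*S = A₁S = S·diag(a₁,…,a_m). Then A is the product of two orthogonal projections. -/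
open Matrix

/-- Padding a matrix with zero blocks does not change its rank. -/
lemma aux_rank_zero_pad {l m : Type*} [Fintype l] [Fintype m] [DecidableEq l] [DecidableEq m]
    (M : Matrix m m ℂ) :
    (Matrix.fromBlocks (0 : Matrix l l ℂ) 0 0 M).rank = M.rank := by
  set E : Matrix (l ⊕ m) m ℂ := Matrix.of fun i j => if i = Sum.inr j then 1 else 0 with hE
  set F : Matrix m (l ⊕ m) ℂ := Matrix.of fun i j => if Sum.inr i = j then 1 else 0 with hF
  have h1 : Matrix.fromBlocks (0 : Matrix l l ℂ) 0 0 M = E * (M * F) := by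
    ext i j
    cases i <;> cases j <;>
      simp [hE, hF, Matrix.mul_apply, Fintype.sum_sum_type, Matrix.fromBlocks]
  have h2 : M = F * (Matrix.fromBlocks (0 : Matrix l l ℂ) 0 0 M * E) := by
    ext i j
    simp [hE, hF, Matrix.mul_apply, Fintype.sum_sum_type, Matrix.fromBlocks]
  refine le_antisymm ?_ ?_
  · rw [h1]
    exact le_trans (Matrix.rank_mul_le_right E (M * F)) (Matrix.rank_mul_le_left M F)
  · conv_lhs => rw [h2]
    exact le_trans (Matrix.rank_mul_le_right F _) (Matrix.rank_mul_le_left _ E)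

/-- A square matrix of full rank is a unit. -/
lemma aux_isUnit_of_rank_eq {k : ℕ} (M : Matrix (Fin k) (Fin k) ℂ) (h : M.rank = k) :
    IsUnit M := by
  have hsurj : Function.Surjective M.mulVecLin := by
    rw [← LinearMap.range_eq_top]
    apply Submodule.eq_top_of_finrank_eq
    simpa [Matrix.rank] using h
  choose g hg using hsurj
  refine (Matrix.isUnit_iff_isUnit_det _).mpr
    (Matrix.isUnit_det_of_right_inverse (B := Matrix.of fun i j => g (Pi.single j 1) i) ?_)
  ext i j
  have h3 := congrFun (hg (Pi.single j 1)) i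
  simp only [Matrix.mulVecLin_apply] at h3
  simp only [Matrix.mul_apply, Matrix.of_apply, Matrix.one_apply]
  rw [show ∑ k', M i k' * g (Pi.single j 1) k' = M.mulVec (g (Pi.single j 1)) i from rfl, h3]
  simp [Pi.single_apply, eq_comm]

/-- If the range of `N` is contained in the range of `S`, then `N` factors through `S`. -/
lemma aux_exists_factor {k m r : ℕ} (S : Matrix (Fin k) (Fin m) ℂ) (N : Matrix (Fin k) (Fin r) ℂ)
    (h : LinearMap.range N.mulVecLin ≤ LinearMap.range S.mulVecLin) :
    ∃ X : Matrix (Fin m) (Fin r) ℂ, S * X = N := by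
  have hc : ∀ j, ∃ x, S.mulVec x = N.mulVec (Pi.single j 1) := fun j =>
    h ⟨Pi.single j 1, rfl⟩
  choose x hx using hc
  refine ⟨Matrix.of fun i j => x j i, ?_⟩
  ext i j
  have h3 := congrFun (hx j) i
  simp only [Matrix.mul_apply, Matrix.of_apply]
  rw [show ∑ k', S i k' * x j k' = S.mulVec (x j) i from rfl, h3]
  simp [Matrix.mulVec, dotProduct, Pi.single_apply]

open scoped ComplexOrder Matrix

/-- If A is similar to I_p ⊕ 0_q ⊕ diag(a₁,…,a_m) with a_j ∈ (0,1), A is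
unitarily similar to I_p ⊕ A₁, and there is an (n−p)×m matrix S of rank m with
A₁A₁*S = A₁S = S·diag(a₁,…,a_m), then A is the product of two orthogonal projections. -/
theorem stmt9 (n p q m : ℕ) (A : Matrix (Fin n) (Fin n) ℂ) (a : Fin m → ℝ)
    (ha : ∀ j, a j ∈ Set.Ioo (0 : ℝ) 1)
    (hsim : ∃ (T : Matrix (Fin n) (Fin n) ℂ) (e : (Fin p ⊕ (Fin q ⊕ Fin m)) ≃ Fin n),
      IsUnit T ∧ A = T * (Matrix.reindex e e
        (Matrix.fromBlocks 1 0 0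
          (Matrix.fromBlocks 0 0 0 (Matrix.diagonal fun j => (a j : ℂ))))) * T⁻¹)
    (A₁ : Matrix (Fin (n - p)) (Fin (n - p)) ℂ)
    (husim : ∃ (f : (Fin p ⊕ Fin (n - p)) ≃ Fin n) (U : Matrix (Fin n) (Fin n) ℂ),
      U ∈ Matrix.unitaryGroup (Fin n) ℂ ∧
      A = U * (Matrix.reindex f f (Matrix.fromBlocks 1 0 0 A₁)) * star U)
    (S : Matrix (Fin (n - p)) (Fin m) ℂ) (hrank : S.rank = m)
    (h1 : A₁ * A₁ᴴ * S = S * Matrix.diagonal (fun j => (a j : ℂ)))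
    (h2 : A₁ * S = S * Matrix.diagonal (fun j => (a j : ℂ))) :
    ∃ P Q : Matrix (Fin n) (Fin n) ℂ, P.IsHermitian ∧ P * P = P ∧
      Q.IsHermitian ∧ Q * Q = Q ∧ A = P * Q := by
  obtain ⟨T, e, hT, hA⟩ := hsim
  obtain ⟨f, U, hU, hAU⟩ := husim
  set D : Matrix (Fin m) (Fin m) ℂ := Matrix.diagonal (fun j => (a j : ℂ)) with hDdef
  -- cardinalities
  have hc1 : p + (q + m) = n := by simpa using Fintype.card_congr e
  have hc2 : p + (n - p) = n := by simpa using Fintype.card_congr f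
  have hnp : n - p = q + m := by omega
  -- determinant facts
  have hU2 : U * star U = 1 := Matrix.mem_unitaryGroup_iff.mp hU
  have hU1 : star U * U = 1 := Matrix.mem_unitaryGroup_iff'.mp hU
  have hTdet : IsUnit T.det := T.isUnit_iff_isUnit_det.mp hT
  have hTidet : IsUnit (T⁻¹).det := T.isUnit_nonsing_inv_det hTdet
  have hUdet : IsUnit U.det := Matrix.isUnit_det_of_right_inverse hU2
  have hUsdet : IsUnit (star U).det := Matrix.isUnit_det_of_left_inverse hU2
  -- conjugation helpers
  have hTcancel : ∀ Z : Matrix (Fin n) (Fin n) ℂ, T⁻¹ * (T * Z) = Z := fun Z => by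
    rw [← Matrix.mul_assoc, Matrix.nonsing_inv_mul T hTdet, Matrix.one_mul]
  have hUcancel : ∀ Z : Matrix (Fin n) (Fin n) ℂ, star U * (U * Z) = Z := fun Z => by
    rw [← Matrix.mul_assoc, hU1, Matrix.one_mul]
  have hTc : ∀ X Y : Matrix (Fin n) (Fin n) ℂ,
      (T * X * T⁻¹) * (T * Y * T⁻¹) = T * (X * Y) * T⁻¹ := fun X Y => by
    simp only [Matrix.mul_assoc, hTcancel]
  have hUc : ∀ X Y : Matrix (Fin n) (Fin n) ℂ,
      (U * X * star U) * (U * Y * star U) = U * (X * Y) * star U := fun X Y => by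
    simp only [Matrix.mul_assoc, hUcancel]
  have hTsub : ∀ X Y : Matrix (Fin n) (Fin n) ℂ,
      T * X * T⁻¹ - T * Y * T⁻¹ = T * (X - Y) * T⁻¹ := fun X Y => by
    rw [Matrix.mul_sub, Matrix.sub_mul]
  have hUsub : ∀ X Y : Matrix (Fin n) (Fin n) ℂ,
      U * X * star U - U * Y * star U = U * (X - Y) * star U := fun X Y => by
    rw [Matrix.mul_sub, Matrix.sub_mul]
  have rank_conjT : ∀ X : Matrix (Fin n) (Fin n) ℂ, (T * X * T⁻¹).rank = X.rank := fun X => by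
    rw [Matrix.rank_mul_eq_left_of_isUnit_det T⁻¹ (T * X) hTidet,
      Matrix.rank_mul_eq_right_of_isUnit_det T X hTdet]
  have rank_conjU : ∀ X : Matrix (Fin n) (Fin n) ℂ, (U * X * star U).rank = X.rank := fun X => by
    rw [Matrix.rank_mul_eq_left_of_isUnit_det (star U) (U * X) hUsdet,
      Matrix.rank_mul_eq_right_of_isUnit_det U X hUdet]
  -- reindex helpers
  have hrmul_e : ∀ X Y : Matrix (Fin p ⊕ (Fin q ⊕ Fin m)) (Fin p ⊕ (Fin q ⊕ Fin m)) ℂ,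
      (Matrix.reindex e e X) * (Matrix.reindex e e Y) = Matrix.reindex e e (X * Y) :=
    fun X Y => by simp [Matrix.reindex_apply, Matrix.submatrix_mul_equiv]
  have hrmul_f : ∀ X Y : Matrix (Fin p ⊕ Fin (n - p)) (Fin p ⊕ Fin (n - p)) ℂ,
      (Matrix.reindex f f X) * (Matrix.reindex f f Y) = Matrix.reindex f f (X * Y) :=
    fun X Y => by simp [Matrix.reindex_apply, Matrix.submatrix_mul_equiv]
  have hrsub_e : ∀ X Y : Matrix (Fin p ⊕ (Fin q ⊕ Fin m)) (Fin p ⊕ (Fin q ⊕ Fin m)) ℂ,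
      (Matrix.reindex e e X) - (Matrix.reindex e e Y) = Matrix.reindex e e (X - Y) :=
    fun X Y => by ext i j; simp
  have hrsub_f : ∀ X Y : Matrix (Fin p ⊕ Fin (n - p)) (Fin p ⊕ Fin (n - p)) ℂ,
      (Matrix.reindex f f X) - (Matrix.reindex f f Y) = Matrix.reindex f f (X - Y) :=
    fun X Y => by ext i j; simp
  have hrone_e : Matrix.reindex e e (1 : Matrix (Fin p ⊕ (Fin q ⊕ Fin m)) _ ℂ) = 1 := by
    simp [Matrix.reindex_apply, Matrix.submatrix_one_equiv]
  have hrone_f : Matrix.reindex f f (1 : Matrix (Fin p ⊕ Fin (n - p)) _ ℂ) = 1 := by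
    simp [Matrix.reindex_apply, Matrix.submatrix_one_equiv]
  -- block helpers
  have fbsub : ∀ {l₁ l₂ : Type} [Fintype l₁] [Fintype l₂]
      (X X' : Matrix l₁ l₁ ℂ) (Y Y' : Matrix l₁ l₂ ℂ) (Z Z' : Matrix l₂ l₁ ℂ)
      (W W' : Matrix l₂ l₂ ℂ),
      Matrix.fromBlocks X Y Z W - Matrix.fromBlocks X' Y' Z' W' =
        Matrix.fromBlocks (X - X') (Y - Y') (Z - Z') (W - W') := by
    intros l₁ l₂ _ _ X X' Y Y' Z Z' W W'
    ext i j
    cases i <;> cases j <;> simp [Matrix.fromBlocks]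
  set K : Matrix (Fin q ⊕ Fin m) (Fin q ⊕ Fin m) ℂ :=
    Matrix.fromBlocks (0 : Matrix (Fin q) (Fin q) ℂ) 0 0 D with hKdef
  set G : Matrix (Fin p ⊕ (Fin q ⊕ Fin m)) (Fin p ⊕ (Fin q ⊕ Fin m)) ℂ :=
    Matrix.fromBlocks (1 : Matrix (Fin p) (Fin p) ℂ) 0 0 K with hGdef
  set G' : Matrix (Fin p ⊕ Fin (n - p)) (Fin p ⊕ Fin (n - p)) ℂ :=
    Matrix.fromBlocks (1 : Matrix (Fin p) (Fin p) ℂ) 0 0 A₁ with hG'def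
  -- rank of D*D - D
  have hDDnz : ∀ j : Fin m, (a j : ℂ) * (a j : ℂ) - (a j : ℂ) ≠ 0 := by
    intro j hcon
    have h0 : (a j : ℝ) ≠ 0 := ne_of_gt (ha j).1
    have h1' : (a j : ℝ) - 1 ≠ 0 := sub_ne_zero.mpr (ne_of_lt (ha j).2)
    have hr : ((a j * a j - a j : ℝ) : ℂ) = 0 := by push_cast; exact hcon
    rw [Complex.ofReal_eq_zero] at hr
    exact (mul_ne_zero h0 h1') (by rw [mul_sub, mul_one]; exact hr)
  have rankDD : (D * D - D).rank = m := by
    have hdiag : D * D - D = Matrix.diagonal (fun j => (a j : ℂ) * (a j : ℂ) - (a j : ℂ)) := by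
      rw [hDdef, Matrix.diagonal_mul_diagonal, Matrix.diagonal_sub]
    rw [hdiag, Matrix.rank_diagonal]
    calc Fintype.card {i // (a i : ℂ) * (a i : ℂ) - (a i : ℂ) ≠ 0}
        = Fintype.card (Fin m) := Fintype.card_congr (Equiv.subtypeUnivEquiv hDDnz)
      _ = m := Fintype.card_fin m
  -- A * A - A from similarity
  have hGG : G * G - G = Matrix.fromBlocks 0 0 0 (Matrix.fromBlocks 0 0 0 (D * D - D)) := by
    rw [hGdef, hKdef]
    simp [Matrix.fromBlocks_multiply, fbsub]
  have hAAs : A * A - A =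
      T * (Matrix.reindex e e
        (Matrix.fromBlocks 0 0 0 (Matrix.fromBlocks 0 0 0 (D * D - D)))) * T⁻¹ := by
    rw [hA, hTc, hrmul_e, hTsub, hrsub_e, hGG]
  have hrank1 : (A * A - A).rank = m := by
    rw [hAAs, rank_conjT, Matrix.rank_reindex, aux_rank_zero_pad, aux_rank_zero_pad, rankDD]
  -- A * A - A from unitary similarity
  have hGG' : G' * G' - G' = Matrix.fromBlocks 0 0 0 (A₁ * A₁ - A₁) := by
    rw [hG'def]
    simp [Matrix.fromBlocks_multiply, fbsub]
  have hAAu : A * A - A =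
      U * (Matrix.reindex f f (Matrix.fromBlocks 0 0 0 (A₁ * A₁ - A₁))) * star U := by
    rw [hAU, hUc, hrmul_f, hUsub, hrsub_f, hGG']
  have hrank2 : (A₁ * A₁ - A₁).rank = m := by
    rw [← hrank1, hAAu, rank_conjU, Matrix.rank_reindex, aux_rank_zero_pad]
  -- 1 - A from similarity
  have h1G : (1 : Matrix (Fin p ⊕ (Fin q ⊕ Fin m)) _ ℂ) - G =
      Matrix.fromBlocks 0 0 0 (Matrix.fromBlocks 1 0 0 (1 - D)) := by
    rw [hGdef, hKdef, ← Matrix.fromBlocks_one, fbsub, ← Matrix.fromBlocks_one, fbsub]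
    simp
  have h1As : (1 : Matrix (Fin n) (Fin n) ℂ) - A =
      T * (Matrix.reindex e e
        (Matrix.fromBlocks 0 0 0 (Matrix.fromBlocks 1 0 0 (1 - D)))) * T⁻¹ := by
    have hone : (1 : Matrix (Fin n) (Fin n) ℂ) =
        T * (Matrix.reindex e e (1 : Matrix (Fin p ⊕ (Fin q ⊕ Fin m)) _ ℂ)) * T⁻¹ := by
      rw [hrone_e, Matrix.mul_one, Matrix.mul_nonsing_inv T hTdet]
    conv_lhs => rw [hone, hA]
    rw [hTsub, hrsub_e, h1G]
  have hunit1D : IsUnit (Matrix.fromBlocks (1 : Matrix (Fin q) (Fin q) ℂ) 0 0 (1 - D)) := by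
    rw [Matrix.isUnit_iff_isUnit_det, Matrix.det_fromBlocks_zero₂₁]
    have h1Dd : (1 : Matrix (Fin m) (Fin m) ℂ) - D =
        Matrix.diagonal (fun j => 1 - (a j : ℂ)) := by
      rw [hDdef, ← Matrix.diagonal_one, Matrix.diagonal_sub]
    rw [Matrix.det_one, one_mul, h1Dd, Matrix.det_diagonal]
    refine IsUnit.mk0 _ (Finset.prod_ne_zero_iff.mpr fun j _ => ?_)
    have : ((1 - a j : ℝ) : ℂ) ≠ 0 := by
      rw [Complex.ofReal_ne_zero]
      exact sub_ne_zero.mpr (ne_of_gt (ha j).2)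
    simpa using this
  have hrank1A : ((1 : Matrix (Fin n) (Fin n) ℂ) - A).rank = q + m := by
    rw [h1As, rank_conjT, Matrix.rank_reindex, aux_rank_zero_pad,
      Matrix.rank_of_isUnit _ hunit1D]
    simp
  -- 1 - A from unitary similarity
  have h1Au : (1 : Matrix (Fin n) (Fin n) ℂ) - A =
      U * (Matrix.reindex f f (Matrix.fromBlocks 0 0 0 (1 - A₁))) * star U := by
    have hone : (1 : Matrix (Fin n) (Fin n) ℂ) =
        U * (Matrix.reindex f f (1 : Matrix (Fin p ⊕ Fin (n - p)) _ ℂ)) * star U := by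
      rw [hrone_f, Matrix.mul_one, hU2]
    conv_lhs => rw [hone, hAU]
    rw [hUsub, hrsub_f]
    congr 1
    congr 1
    congr 1
    rw [hG'def, ← Matrix.fromBlocks_one, fbsub]
    simp
  have hA₁unit : IsUnit (1 - A₁) := by
    apply aux_isUnit_of_rank_eq
    have : ((1 : Matrix (Fin n) (Fin n) ℂ) - A).rank = (1 - A₁).rank := by
      rw [h1Au, rank_conjU, Matrix.rank_reindex, aux_rank_zero_pad]
    rw [← this, hrank1A, hnp]
  -- rank of A₁
  have hA₁rank : A₁.rank = m := by
    have hfac : A₁ * A₁ - A₁ = A₁ * (A₁ - 1) := by rw [Matrix.mul_sub, Matrix.mul_one]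
    have hdet : IsUnit (A₁ - 1).det := by
      rw [show A₁ - 1 = -(1 - A₁) by rw [neg_sub]]
      exact (Matrix.isUnit_iff_isUnit_det _).mp hA₁unit.neg
    calc A₁.rank = (A₁ * (A₁ - 1)).rank :=
          (Matrix.rank_mul_eq_left_of_isUnit_det (A₁ - 1) A₁ hdet).symm
      _ = m := by rw [← hfac, hrank2]
  -- D is a unit
  have hDdet : IsUnit D.det := by
    rw [hDdef, Matrix.det_diagonal]
    refine IsUnit.mk0 _ (Finset.prod_ne_zero_iff.mpr fun j _ => ?_)
    simpa using ne_of_gt (ha j).1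
  -- S factors through A₁
  have hS' : A₁ * (S * D⁻¹) = S := by
    rw [← Matrix.mul_assoc, h2, Matrix.mul_assoc, Matrix.mul_nonsing_inv D hDdet,
      Matrix.mul_one]
  have hle : LinearMap.range S.mulVecLin ≤ LinearMap.range A₁.mulVecLin := by
    rw [← hS', Matrix.mulVecLin_mul]
    exact LinearMap.range_comp_le_range _ _
  have hreq : LinearMap.range S.mulVecLin = LinearMap.range A₁.mulVecLin := by
    apply Submodule.eq_of_le_of_finrank_le hle
    show Module.finrank ℂ (LinearMap.range A₁.mulVecLin) ≤
      Module.finrank ℂ (LinearMap.range S.mulVecLin)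
    rw [show Module.finrank ℂ (LinearMap.range A₁.mulVecLin) = A₁.rank from rfl,
      show Module.finrank ℂ (LinearMap.range S.mulVecLin) = S.rank from rfl, hA₁rank, hrank]
  obtain ⟨X, hX⟩ := aux_exists_factor S A₁ (le_of_eq hreq.symm)
  -- commutation of D with Sᴴ * S
  have hDH : Dᴴ = D := by
    rw [hDdef]
    ext i j
    rcases eq_or_ne i j with h | h
    · simp [Matrix.conjTranspose_apply, Matrix.diagonal_apply, h, Complex.conj_ofReal]
    · simp [Matrix.conjTranspose_apply, Matrix.diagonal_apply, h, Ne.symm h]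
  have hherm : (Sᴴ * S * D)ᴴ = Sᴴ * S * D := by
    have e1 : Sᴴ * S * D = Sᴴ * (A₁ * A₁ᴴ * S) := by
      rw [h1, Matrix.mul_assoc]
    rw [e1]
    simp only [Matrix.conjTranspose_mul, Matrix.conjTranspose_conjTranspose, Matrix.mul_assoc]
  have hcomm : D * (Sᴴ * S) = Sᴴ * S * D := by
    conv_lhs => rw [← hDH, ← show (Sᴴ * S)ᴴ = Sᴴ * S by
      simp [Matrix.conjTranspose_mul], ← Matrix.conjTranspose_mul, hherm]
  -- units
  have hSSunit : IsUnit (Sᴴ * S) := by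
    apply aux_isUnit_of_rank_eq
    rw [Matrix.rank_conjTranspose_mul_self, hrank]
  have hSSdet : IsUnit (Sᴴ * S).det := (Matrix.isUnit_iff_isUnit_det _).mp hSSunit
  -- the matrix R = A₁ᴴ S and its Gram matrix
  set R : Matrix (Fin (n - p)) (Fin m) ℂ := A₁ᴴ * S with hRdef
  have hRH : Rᴴ = Sᴴ * A₁ := by
    rw [hRdef, Matrix.conjTranspose_mul, Matrix.conjTranspose_conjTranspose]
  have h1' : A₁ * (A₁ᴴ * S) = S * D := by rw [← Matrix.mul_assoc, h1]
  have hRR : Rᴴ * R = Sᴴ * S * D := by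
    rw [hRH, hRdef, Matrix.mul_assoc, h1', ← Matrix.mul_assoc]
  have hDunit : IsUnit D := (Matrix.isUnit_iff_isUnit_det _).mpr hDdet
  have hRRunit : IsUnit (Rᴴ * R) := by rw [hRR]; exact hSSunit.mul hDunit
  have hRRdet : IsUnit (Rᴴ * R).det := (Matrix.isUnit_iff_isUnit_det _).mp hRRunit
  set P₁ : Matrix (Fin (n - p)) (Fin (n - p)) ℂ := S * (Sᴴ * S)⁻¹ * Sᴴ with hP₁def
  set Q₁ : Matrix (Fin (n - p)) (Fin (n - p)) ℂ := R * (Rᴴ * R)⁻¹ * Rᴴ with hQ₁def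
  -- hermiticity
  have hSSH : (Sᴴ * S)ᴴ = Sᴴ * S := by
    rw [Matrix.conjTranspose_mul, Matrix.conjTranspose_conjTranspose]
  have hRRH : (Rᴴ * R)ᴴ = Rᴴ * R := by
    rw [Matrix.conjTranspose_mul, Matrix.conjTranspose_conjTranspose]
  have hSSinvH : ((Sᴴ * S)⁻¹)ᴴ = (Sᴴ * S)⁻¹ := Matrix.IsHermitian.inv hSSH
  have hRRinvH : ((Rᴴ * R)⁻¹)ᴴ = (Rᴴ * R)⁻¹ := Matrix.IsHermitian.inv hRRH
  have hP₁H : P₁ᴴ = P₁ := by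
    rw [hP₁def]
    simp only [Matrix.conjTranspose_mul, Matrix.conjTranspose_conjTranspose, hSSinvH,
      Matrix.mul_assoc]
  have hQ₁H : Q₁ᴴ = Q₁ := by
    rw [hQ₁def]
    simp only [Matrix.conjTranspose_mul, Matrix.conjTranspose_conjTranspose, hRRinvH,
      Matrix.mul_assoc]
  -- idempotency
  have hSScancel : (Sᴴ * S)⁻¹ * (Sᴴ * S) = 1 := Matrix.nonsing_inv_mul _ hSSdet
  have hRRcancel : (Rᴴ * R)⁻¹ * (Rᴴ * R) = 1 := Matrix.nonsing_inv_mul _ hRRdet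
  have hP₁S : P₁ * S = S := by
    rw [hP₁def]
    calc S * (Sᴴ * S)⁻¹ * Sᴴ * S = S * ((Sᴴ * S)⁻¹ * (Sᴴ * S)) := by
          simp only [Matrix.mul_assoc]
      _ = S := by rw [hSScancel, Matrix.mul_one]
  have hQ₁R : Q₁ * R = R := by
    rw [hQ₁def]
    calc R * (Rᴴ * R)⁻¹ * Rᴴ * R = R * ((Rᴴ * R)⁻¹ * (Rᴴ * R)) := by
          simp only [Matrix.mul_assoc]
      _ = R := by rw [hRRcancel, Matrix.mul_one]
  have hP₁idem : P₁ * P₁ = P₁ := by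
    calc P₁ * P₁ = (P₁ * S) * ((Sᴴ * S)⁻¹ * Sᴴ) := by
          rw [hP₁def]; simp only [Matrix.mul_assoc]
      _ = P₁ := by rw [hP₁S, hP₁def]; simp only [Matrix.mul_assoc]
  have hQ₁idem : Q₁ * Q₁ = Q₁ := by
    calc Q₁ * Q₁ = (Q₁ * R) * ((Rᴴ * R)⁻¹ * Rᴴ) := by
          rw [hQ₁def]; simp only [Matrix.mul_assoc]
      _ = Q₁ := by rw [hQ₁R, hQ₁def]; simp only [Matrix.mul_assoc]
  -- the key computation : P₁ * Q₁ = A₁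
  have hSR : Sᴴ * R = D * (Sᴴ * S) := by
    calc Sᴴ * R = (A₁ * S)ᴴ * S := by
          rw [hRdef, ← Matrix.mul_assoc, ← Matrix.conjTranspose_mul]
      _ = (S * D)ᴴ * S := by rw [h2]
      _ = D * (Sᴴ * S) := by rw [Matrix.conjTranspose_mul, hDH, Matrix.mul_assoc]
  have hinvRR : (Rᴴ * R)⁻¹ = D⁻¹ * (Sᴴ * S)⁻¹ := by rw [hRR, Matrix.mul_inv_rev]
  have hP₁Q₁ : P₁ * Q₁ = A₁ := by
    calc P₁ * Q₁
        = S * (Sᴴ * S)⁻¹ * (Sᴴ * R) * ((Rᴴ * R)⁻¹ * Rᴴ) := by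
          rw [hP₁def, hQ₁def]; simp only [Matrix.mul_assoc]
      _ = S * (Sᴴ * S)⁻¹ * (Sᴴ * S * D) * ((Rᴴ * R)⁻¹ * Rᴴ) := by rw [hSR, hcomm]
      _ = S * ((Sᴴ * S)⁻¹ * (Sᴴ * S)) * (D * ((Rᴴ * R)⁻¹ * Rᴴ)) := by
          simp only [Matrix.mul_assoc]
      _ = S * (D * ((Rᴴ * R)⁻¹ * Rᴴ)) := by rw [hSScancel, Matrix.mul_one]
      _ = S * (D * (D⁻¹ * ((Sᴴ * S)⁻¹ * Rᴴ))) := by rw [hinvRR]; simp only [Matrix.mul_assoc]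
      _ = S * ((Sᴴ * S)⁻¹ * Rᴴ) := by
          rw [← Matrix.mul_assoc D D⁻¹, Matrix.mul_nonsing_inv D hDdet, Matrix.one_mul]
      _ = S * ((Sᴴ * S)⁻¹ * (Sᴴ * (S * X))) := by rw [hRH, ← hX]
      _ = S * ((Sᴴ * S)⁻¹ * (Sᴴ * S)) * X := by simp only [Matrix.mul_assoc]
      _ = A₁ := by rw [hSScancel, Matrix.mul_one, hX]
  -- assemble the projections
  have hBPH : (Matrix.reindex f f (Matrix.fromBlocks (1 : Matrix (Fin p) (Fin p) ℂ) 0 0 P₁))ᴴ =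
      Matrix.reindex f f (Matrix.fromBlocks (1 : Matrix (Fin p) (Fin p) ℂ) 0 0 P₁) := by
    rw [Matrix.conjTranspose_reindex, Matrix.fromBlocks_conjTranspose]
    simp [hP₁H]
  have hBQH : (Matrix.reindex f f (Matrix.fromBlocks (1 : Matrix (Fin p) (Fin p) ℂ) 0 0 Q₁))ᴴ =
      Matrix.reindex f f (Matrix.fromBlocks (1 : Matrix (Fin p) (Fin p) ℂ) 0 0 Q₁) := by
    rw [Matrix.conjTranspose_reindex, Matrix.fromBlocks_conjTranspose]
    simp [hQ₁H]
  have hBPmul : (Matrix.fromBlocks (1 : Matrix (Fin p) (Fin p) ℂ) 0 0 P₁ : Matrix (Fin p ⊕ Fin (n - p)) _ ℂ) *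
      Matrix.fromBlocks (1 : Matrix (Fin p) (Fin p) ℂ) 0 0 P₁ = Matrix.fromBlocks (1 : Matrix (Fin p) (Fin p) ℂ) 0 0 P₁ := by
    rw [Matrix.fromBlocks_multiply]
    simp [hP₁idem]
  have hBQmul : (Matrix.fromBlocks (1 : Matrix (Fin p) (Fin p) ℂ) 0 0 Q₁ : Matrix (Fin p ⊕ Fin (n - p)) _ ℂ) *
      Matrix.fromBlocks (1 : Matrix (Fin p) (Fin p) ℂ) 0 0 Q₁ = Matrix.fromBlocks (1 : Matrix (Fin p) (Fin p) ℂ) 0 0 Q₁ := by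
    rw [Matrix.fromBlocks_multiply]
    simp [hQ₁idem]
  have hBPQ : (Matrix.fromBlocks (1 : Matrix (Fin p) (Fin p) ℂ) 0 0 P₁ : Matrix (Fin p ⊕ Fin (n - p)) _ ℂ) *
      Matrix.fromBlocks (1 : Matrix (Fin p) (Fin p) ℂ) 0 0 Q₁ = Matrix.fromBlocks (1 : Matrix (Fin p) (Fin p) ℂ) 0 0 A₁ := by
    rw [Matrix.fromBlocks_multiply]
    simp [hP₁Q₁]
  refine ⟨U * (Matrix.reindex f f (Matrix.fromBlocks (1 : Matrix (Fin p) (Fin p) ℂ) 0 0 P₁)) * star U,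
      U * (Matrix.reindex f f (Matrix.fromBlocks (1 : Matrix (Fin p) (Fin p) ℂ) 0 0 Q₁)) * star U, ?_, ?_, ?_, ?_, ?_⟩
  · show _ᴴ = _
    rw [Matrix.star_eq_conjTranspose]
    simp only [Matrix.conjTranspose_mul, Matrix.conjTranspose_conjTranspose, hBPH,
      Matrix.mul_assoc]
  · rw [hUc, hrmul_f, hBPmul]
  · show _ᴴ = _
    rw [Matrix.star_eq_conjTranspose]
    simp only [Matrix.conjTranspose_mul, Matrix.conjTranspose_conjTranspose, hBQH,
      Matrix.mul_assoc]
  · rw [hUc, hrmul_f, hBQmul]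
  · rw [hUc, hrmul_f, hBPQ]
    exact hAU
end

section
/- If A ∈ M_n is the product of two orthogonal projections and is similar to I_p ⊕ 0_q ⊕ diag(a₁,…,a_m) with each a_j ∈ (0,1), then A is unitarily similar to I_p ⊕ A₁ for some A₁ ∈ M_{n−p}, and there exists an (n−p)×m matrix S of rank m such that A₁A₁*S = A₁S = S·diag(a₁,…,a_m). -/
open scoped ComplexOrder Matrix InnerProductSpace


private lemma toEL_mul {n : ℕ} (B C : Matrix (Fin n) (Fin n) ℂ) :
    Matrix.toEuclideanLin (B * C) =
      (Matrix.toEuclideanLin B).comp (Matrix.toEuclideanLin C) := by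
  simp only [Matrix.toEuclideanLin_eq_toLin]
  exact Matrix.toLin_mul _ (PiLp.basisFun 2 ℂ (Fin n)) _ _ _

private lemma toEL_apply {n : ℕ} (B : Matrix (Fin n) (Fin n) ℂ)
    (x : EuclideanSpace ℂ (Fin n)) :
    Matrix.toEuclideanLin B x = B *ᵥ x := rfl

private lemma proj_norm_le {n : ℕ} {P : Matrix (Fin n) (Fin n) ℂ} (hP : P.IsHermitian)
    (hP2 : P * P = P) (x : EuclideanSpace ℂ (Fin n)) :
    ‖Matrix.toEuclideanLin P x‖ ≤ ‖x‖ ∧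
      (‖x‖ ≤ ‖Matrix.toEuclideanLin P x‖ → Matrix.toEuclideanLin P x = x) := by
  set π := Matrix.toEuclideanLin P with hπ
  have hsym : ∀ u v : EuclideanSpace ℂ (Fin n), ⟪π u, v⟫_ℂ = ⟪u, π v⟫_ℂ :=
    (Matrix.isHermitian_iff_isSymmetric.mp hP)
  have hidem : ∀ v, π (π v) = π v := fun v => by
    rw [hπ, ← LinearMap.comp_apply, ← toEL_mul, hP2]
  have horth : ⟪π x, x - π x⟫_ℂ = 0 := by
    rw [inner_sub_right, hsym x x, hsym x (π x), hidem, sub_self]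
  have hpyth : ‖x‖ ^ 2 = ‖π x‖ ^ 2 + ‖x - π x‖ ^ 2 := by
    have := norm_add_sq_eq_norm_sq_add_norm_sq_of_inner_eq_zero _ _ horth
    rw [add_sub_cancel] at this
    simpa [pow_two] using this
  constructor
  · nlinarith [norm_nonneg (x - π x), norm_nonneg x, norm_nonneg (π x)]
  · intro h
    have : ‖x - π x‖ = 0 := by nlinarith [norm_nonneg (x - π x), norm_nonneg x, norm_nonneg (π x)]
    have := norm_eq_zero.mp this
    rw [sub_eq_zero] at this
    exact this.symm

private lemma proj_fix {n : ℕ} {P Q : Matrix (Fin n) (Fin n) ℂ} (hP : P.IsHermitian)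
    (hP2 : P * P = P) (hQ : Q.IsHermitian) (hQ2 : Q * Q = Q) (x : EuclideanSpace ℂ (Fin n))
    (hx : Matrix.toEuclideanLin (P * Q) x = x) :
    Matrix.toEuclideanLin P x = x ∧ Matrix.toEuclideanLin Q x = x := by
  rw [toEL_mul, LinearMap.comp_apply] at hx
  have h1 := proj_norm_le hP hP2 (Matrix.toEuclideanLin Q x)
  have h2 := proj_norm_le hQ hQ2 x
  have hq : Matrix.toEuclideanLin Q x = x := by
    refine h2.2 ?_
    calc ‖x‖ = ‖Matrix.toEuclideanLin P (Matrix.toEuclideanLin Q x)‖ := by rw [hx]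
    _ ≤ ‖Matrix.toEuclideanLin Q x‖ := h1.1
  refine ⟨?_, hq⟩
  rw [hq] at hx
  exact hx

set_option maxHeartbeats 1000000 in
/-- If A is the product of two orthogonal projections and is similar to
I_p ⊕ 0_q ⊕ diag(a₁,…,a_m) with a_j ∈ (0,1), then A is unitarily similar to I_p ⊕ A₁ and
there exists an (n−p)×m matrix S of rank m with A₁A₁*S = A₁S = S·diag(a₁,…,a_m). -/
theorem stmt10 (n p q m : ℕ) (A : Matrix (Fin n) (Fin n) ℂ) (a : Fin m → ℝ)
    (ha : ∀ j, a j ∈ Set.Ioo (0 : ℝ) 1)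
    (hprod : ∃ P Q : Matrix (Fin n) (Fin n) ℂ, P.IsHermitian ∧ P * P = P ∧
      Q.IsHermitian ∧ Q * Q = Q ∧ A = P * Q)
    (hsim : ∃ (T : Matrix (Fin n) (Fin n) ℂ) (e : (Fin p ⊕ (Fin q ⊕ Fin m)) ≃ Fin n),
      IsUnit T ∧ A = T * (Matrix.reindex e e
        (Matrix.fromBlocks 1 0 0
          (Matrix.fromBlocks 0 0 0 (Matrix.diagonal fun j => (a j : ℂ))))) * T⁻¹) :
    ∃ (A₁ : Matrix (Fin (n - p)) (Fin (n - p)) ℂ)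
      (f : (Fin p ⊕ Fin (n - p)) ≃ Fin n) (U : Matrix (Fin n) (Fin n) ℂ),
      U ∈ Matrix.unitaryGroup (Fin n) ℂ ∧
      A = U * (Matrix.reindex f f (Matrix.fromBlocks 1 0 0 A₁)) * star U ∧
      ∃ S : Matrix (Fin (n - p)) (Fin m) ℂ, S.rank = m ∧
        A₁ * A₁ᴴ * S = S * Matrix.diagonal (fun j => (a j : ℂ)) ∧
        A₁ * S = S * Matrix.diagonal (fun j => (a j : ℂ)) := by
  classical
  obtain ⟨P, Q, hP, hP2, hQ, hQ2, hAPQ⟩ := hprod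
  obtain ⟨T, e, hT, hAsim⟩ := hsim
  -- basic numerology
  have hn : p + (q + m) = n := by
    simpa using (Fintype.card_congr e)
  have hpn : p ≤ n := by omega
  -- the diagonal form
  set w₀ : (Fin p ⊕ (Fin q ⊕ Fin m)) → ℂ :=
    Sum.elim (fun _ => 1) (Sum.elim (fun _ => 0) (fun j => (a j : ℂ))) with hw₀
  set w : Fin n → ℂ := w₀ ∘ e.symm with hw
  have haj0 : ∀ j, (a j : ℂ) ≠ 0 := fun j =>
    Complex.ofReal_ne_zero.mpr (ne_of_gt (ha j).1)
  have haj1 : ∀ j, (a j : ℂ) ≠ 1 := fun j h =>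
    absurd (by exact_mod_cast h : a j = 1) (ne_of_lt (ha j).2)
  have hw1 : ∀ i : Fin q ⊕ Fin m, w₀ (Sum.inr i) ≠ 1 := by
    intro i
    cases i with
    | inl i => simp [hw₀]
    | inr j => simpa [hw₀] using haj1 j
  have hA : A = T * Matrix.diagonal w * T⁻¹ := by
    have h1 : (Matrix.fromBlocks 0 0 0 (Matrix.diagonal fun j => (a j : ℂ)) :
        Matrix (Fin q ⊕ Fin m) (Fin q ⊕ Fin m) ℂ)
        = Matrix.diagonal (Sum.elim (fun _ => (0 : ℂ)) fun j => (a j : ℂ)) := by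
      rw [← Matrix.diagonal_zero, Matrix.fromBlocks_diagonal]
    have h2 : (Matrix.reindex e e
        (Matrix.fromBlocks 1 0 0
          (Matrix.fromBlocks 0 0 0 (Matrix.diagonal fun j => (a j : ℂ)))))
        = Matrix.diagonal w := by
      rw [h1, ← Matrix.diagonal_one, Matrix.fromBlocks_diagonal, Matrix.reindex_apply,
        Matrix.submatrix_diagonal_equiv]
    rw [hAsim, h2]
  have hTdet : IsUnit T.det := (Matrix.isUnit_iff_isUnit_det T).mp hT
  have hTinv : T⁻¹ * T = 1 := Matrix.nonsing_inv_mul T hTdet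
  have hTinv' : T * T⁻¹ = 1 := Matrix.mul_nonsing_inv T hTdet
  have hAT : A * T = T * Matrix.diagonal w := by
    rw [hA, mul_assoc (T * Matrix.diagonal w), hTinv, mul_one]
  -- eigenvectors of A
  set t : Fin m → (Fin n → ℂ) := fun j => fun r => T r (e (Sum.inr (Sum.inr j))) with ht
  have hAt : ∀ j, A *ᵥ t j = (a j : ℂ) • t j := by
    intro j
    have hwk : w (e (Sum.inr (Sum.inr j))) = (a j : ℂ) := by simp [hw, hw₀]
    funext i
    have h := congrFun (congrFun hAT i) (e (Sum.inr (Sum.inr j)))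
    rw [Matrix.mul_apply, Matrix.mul_diagonal, hwk] at h
    simpa [Matrix.mulVec, dotProduct, ht, mul_comm] using h
  have hPt : ∀ j, P *ᵥ t j = t j := by
    intro j
    have h : (a j : ℂ) • (P *ᵥ t j) = (a j : ℂ) • t j := by
      rw [← Matrix.mulVec_smul, ← hAt j, Matrix.mulVec_mulVec, hAPQ, ← mul_assoc, hP2,
        ← hAPQ, hAt j]
    exact smul_right_injective _ (haj0 j) h
  have hAH : Aᴴ = Q * P := by rw [hAPQ, Matrix.conjTranspose_mul, hP.eq, hQ.eq]
  have hAAH : A * Aᴴ = A * P := by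
    rw [hAH, hAPQ, ← mul_assoc, mul_assoc P Q Q, hQ2]
  have hAAt : ∀ j, (A * Aᴴ) *ᵥ t j = (a j : ℂ) • t j := by
    intro j
    rw [hAAH, ← Matrix.mulVec_mulVec, hPt j, hAt j]
  -- the eigenspace M of eigenvalue 1
  set M : Submodule ℂ (EuclideanSpace ℂ (Fin n)) :=
    LinearMap.ker (Matrix.toEuclideanLin (A - 1)) with hM
  have hmemM : ∀ x : EuclideanSpace ℂ (Fin n),
      x ∈ M ↔ Matrix.toEuclideanLin A x = x := by
    intro x
    have h1 : Matrix.toEuclideanLin (1 : Matrix (Fin n) (Fin n) ℂ) x = x := by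
      apply WithLp.ofLp_injective 2
      rw [toEL_apply, Matrix.one_mulVec]
    rw [hM, LinearMap.mem_ker, map_sub, LinearMap.sub_apply, sub_eq_zero, h1]
  have hvan : ∀ x : EuclideanSpace ℂ (Fin n), x ∈ M → ∀ k : Fin q ⊕ Fin m,
      (T⁻¹ *ᵥ x) (e (Sum.inr k)) = 0 := by
    intro x hx k
    have hx' : A *ᵥ x = x := by
      have := (hmemM x).1 hx
      rw [← toEL_apply, this]
    have h1 : T⁻¹ * A = Matrix.diagonal w * T⁻¹ := by
      rw [hA, ← mul_assoc, ← mul_assoc, hTinv, one_mul]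
    have h2 : Matrix.diagonal w *ᵥ (T⁻¹ *ᵥ x) = T⁻¹ *ᵥ x := by
      rw [Matrix.mulVec_mulVec, ← h1, ← Matrix.mulVec_mulVec, hx']
    have h3 := congrFun h2 (e (Sum.inr k))
    rw [Matrix.mulVec_diagonal] at h3
    have hwne : w (e (Sum.inr k)) ≠ 1 := by simpa [hw] using hw1 k
    by_contra hne
    exact hwne (mul_right_cancel₀ hne (h3.trans (one_mul _).symm))
  have hfM : Module.finrank ℂ M = p := by
    have hle : Module.finrank ℂ M ≤ p := by
      let φ : M →ₗ[ℂ] (Fin p → ℂ) :=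
        { toFun := fun x => fun i => (T⁻¹ *ᵥ (x : EuclideanSpace ℂ (Fin n))) (e (Sum.inl i)),
          map_add' := by
            intro u v
            funext i
            simp only [Matrix.mulVec, dotProduct, Submodule.coe_add, WithLp.ofLp_add,
              mul_add, Finset.sum_add_distrib, Pi.add_apply],
          map_smul' := by
            intro cst v
            funext i
            simp only [Matrix.mulVec, dotProduct, Submodule.coe_smul, WithLp.ofLp_smul,
              smul_eq_mul, RingHom.id_apply, Pi.smul_apply, Finset.mul_sum]
            exact Finset.sum_congr rfl (by intros; ring) }
      have hinj : Function.Injective φ := by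
        intro u v huv
        apply Subtype.ext
        have h0 : T⁻¹ *ᵥ (u : EuclideanSpace ℂ (Fin n))
            = T⁻¹ *ᵥ (v : EuclideanSpace ℂ (Fin n)) := by
          funext r
          obtain ⟨i, rfl⟩ : ∃ i, e i = r := ⟨e.symm r, e.apply_symm_apply r⟩
          cases i with
          | inl i => exact congrFun huv i
          | inr k => rw [hvan u u.2 k, hvan v v.2 k]
        apply WithLp.ofLp_injective 2
        calc (u : EuclideanSpace ℂ (Fin n))
            = T *ᵥ (T⁻¹ *ᵥ (u : EuclideanSpace ℂ (Fin n))) := by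
              rw [Matrix.mulVec_mulVec, hTinv', Matrix.one_mulVec]
        _ = T *ᵥ (T⁻¹ *ᵥ (v : EuclideanSpace ℂ (Fin n))) := by rw [h0]
        _ = (v : EuclideanSpace ℂ (Fin n)) := by
              rw [Matrix.mulVec_mulVec, hTinv', Matrix.one_mulVec]
      have := LinearMap.finrank_le_finrank_of_injective hinj
      simpa [Module.finrank_fin_fun] using this
    have hge : p ≤ Module.finrank ℂ M := by
      have hTcols : LinearIndependent ℂ (fun k : Fin n => Tᵀ k) :=
        Matrix.linearIndependent_cols_iff_isUnit.mpr hT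
      have hinj2 : Function.Injective (fun i : Fin p => e (Sum.inl i)) :=
        e.injective.comp Sum.inl_injective
      have hti : LinearIndependent ℂ (fun i : Fin p => Tᵀ (e (Sum.inl i))) :=
        hTcols.comp _ hinj2
      have hmem : ∀ i : Fin p, WithLp.toLp 2 (Tᵀ (e (Sum.inl i))) ∈ M := by
        intro i
        rw [hmemM]
        apply WithLp.ofLp_injective 2
        rw [toEL_apply, WithLp.ofLp_toLp]
        have hwk : w (e (Sum.inl i)) = 1 := by simp [hw, hw₀]
        funext r
        have h := congrFun (congrFun hAT r) (e (Sum.inl i))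
        rw [Matrix.mul_apply, Matrix.mul_diagonal, hwk, mul_one] at h
        simpa [Matrix.mulVec, dotProduct, Matrix.transpose_apply] using h
      have hfam : LinearIndependent ℂ (fun i : Fin p =>
          (⟨WithLp.toLp 2 (Tᵀ (e (Sum.inl i))), hmem i⟩ : M)) := by
        apply LinearIndependent.of_comp M.subtype
        exact hti.map' (WithLp.linearEquiv 2 ℂ (Fin n → ℂ)).symm.toLinearMap (LinearEquiv.ker _)
      simpa using hfam.fintype_card_le_finrank
    omega
  have hfO : Module.finrank ℂ Mᗮ = n - p := by
    have := Submodule.finrank_add_finrank_orthogonal M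
    rw [hfM, finrank_euclideanSpace_fin] at this
    omega
  have hfixAH : ∀ x ∈ M, Matrix.toEuclideanLin Aᴴ x = x := by
    intro x hx
    have hfix : Matrix.toEuclideanLin (P * Q) x = x := by
      rw [← hAPQ]; exact (hmemM x).1 hx
    obtain ⟨hPx, hQx⟩ := proj_fix hP hP2 hQ hQ2 x hfix
    rw [hAH, toEL_mul, LinearMap.comp_apply, hPx, hQx]
  have hinvO : ∀ y ∈ Mᗮ, Matrix.toEuclideanLin A y ∈ Mᗮ := by
    intro y hy
    rw [Submodule.mem_orthogonal]
    intro u hu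
    have : ⟪u, Matrix.toEuclideanLin A y⟫_ℂ
        = ⟪Matrix.toEuclideanLin Aᴴ u, y⟫_ℂ := by
      rw [Matrix.toEuclideanLin_conjTranspose_eq_adjoint, LinearMap.adjoint_inner_left]
    rw [this, hfixAH u hu]
    exact (Submodule.mem_orthogonal M y).1 hy u hu
  -- orthonormal bases
  set bM : OrthonormalBasis (Fin p) ℂ M :=
    (stdOrthonormalBasis ℂ M).reindex (finCongr hfM) with hbM
  set bO : OrthonormalBasis (Fin (n - p)) ℂ (Mᗮ : Submodule ℂ (EuclideanSpace ℂ (Fin n))) :=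
    (stdOrthonormalBasis ℂ Mᗮ).reindex (finCongr hfO) with hbO
  have hcompl : IsCompl M Mᗮ := Submodule.isCompl_orthogonal_of_hasOrthogonalProjection
  set c₀ : Module.Basis (Fin p ⊕ Fin (n - p)) ℂ (EuclideanSpace ℂ (Fin n)) :=
    (bM.toBasis.prod bO.toBasis).map (Submodule.prodEquivOfIsCompl M Mᗮ hcompl) with hc₀
  have hc₀l : ∀ i, c₀ (Sum.inl i) = (bM i : EuclideanSpace ℂ (Fin n)) := by
    intro i
    simp [hc₀, Module.Basis.prod_apply, Submodule.coe_prodEquivOfIsCompl]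
  have hc₀r : ∀ i, c₀ (Sum.inr i) = (bO i : EuclideanSpace ℂ (Fin n)) := by
    intro i
    simp [hc₀, Module.Basis.prod_apply, Submodule.coe_prodEquivOfIsCompl]
  have horthc : Orthonormal ℂ c₀ := by
    rw [orthonormal_iff_ite]
    intro i j
    cases i with
    | inl i =>
      cases j with
      | inl j =>
        rw [hc₀l, hc₀l, ← Submodule.coe_inner]
        rw [orthonormal_iff_ite.mp bM.orthonormal i j]
        simp
      | inr j =>
        rw [hc₀l, hc₀r]
        rw [Submodule.inner_right_of_mem_orthogonal (bM i).2 (bO j).2]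
        simp
    | inr i =>
      cases j with
      | inl j =>
        rw [hc₀r, hc₀l]
        rw [Submodule.inner_left_of_mem_orthogonal (bM j).2 (bO i).2]
        simp
      | inr j =>
        rw [hc₀r, hc₀r, ← Submodule.coe_inner]
        rw [orthonormal_iff_ite.mp bO.orthonormal i j]
        simp [Sum.inr.injEq]
  set c : OrthonormalBasis (Fin p ⊕ Fin (n - p)) ℂ (EuclideanSpace ℂ (Fin n)) :=
    c₀.toOrthonormalBasis horthc with hc
  have hcb : c.toBasis = c₀ := Module.Basis.toBasis_toOrthonormalBasis c₀ horthc
  set e' : (Fin p ⊕ Fin (n - p)) ≃ Fin n := finSumFinEquiv.trans (finCongr (by omega)) with he'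
  set c' : OrthonormalBasis (Fin n) ℂ (EuclideanSpace ℂ (Fin n)) := c.reindex e' with hc'
  set b₀ : OrthonormalBasis (Fin n) ℂ (EuclideanSpace ℂ (Fin n)) :=
    EuclideanSpace.basisFun (Fin n) ℂ with hb₀
  set U : Matrix (Fin n) (Fin n) ℂ := b₀.toBasis.toMatrix c'.toBasis with hUdef
  have hU : U ∈ Matrix.unitaryGroup (Fin n) ℂ :=
    b₀.toMatrix_orthonormalBasis_mem_unitary c'
  have hUU : star U * U = 1 := Matrix.mem_unitaryGroup_iff'.mp hU
  have hUU' : U * star U = 1 := Matrix.mem_unitaryGroup_iff.mp hU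
  set Bs : Matrix (Fin p ⊕ Fin (n - p)) (Fin p ⊕ Fin (n - p)) ℂ :=
    LinearMap.toMatrix c.toBasis c.toBasis (Matrix.toEuclideanLin A) with hBsdef
  set A₁ : Matrix (Fin (n - p)) (Fin (n - p)) ℂ :=
    Matrix.of (fun i j => Bs (Sum.inr i) (Sum.inr j)) with hA₁
  have hcmem_l : ∀ i, c (Sum.inl i) ∈ M := by
    intro i
    rw [hc, Module.Basis.coe_toOrthonormalBasis, hc₀l]
    exact (bM i).2
  have hcmem_r : ∀ i, c (Sum.inr i) ∈ Mᗮ := by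
    intro i
    rw [hc, Module.Basis.coe_toOrthonormalBasis, hc₀r]
    exact (bO i).2
  have hBs : Bs = Matrix.fromBlocks 1 0 0 A₁ := by
    ext i j
    rw [hBsdef, LinearMap.toMatrix_apply]
    cases j with
    | inl j =>
      have hfixj : Matrix.toEuclideanLin A (c.toBasis (Sum.inl j)) = c.toBasis (Sum.inl j) := by
        rw [← hmemM]
        rw [OrthonormalBasis.coe_toBasis]
        exact hcmem_l j
      rw [hfixj, Module.Basis.repr_self]
      cases i with
      | inl i =>
        simp [Matrix.fromBlocks, Matrix.one_apply, Finsupp.single_apply, eq_comm]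
      | inr i =>
        simp [Matrix.fromBlocks, Finsupp.single_apply]
    | inr j =>
      have hmemj : Matrix.toEuclideanLin A (c.toBasis (Sum.inr j)) ∈ Mᗮ := by
        rw [OrthonormalBasis.coe_toBasis]
        exact hinvO _ (hcmem_r j)
      cases i with
      | inl i =>
        rw [OrthonormalBasis.coe_toBasis_repr_apply, OrthonormalBasis.repr_apply_apply]
        rw [Submodule.inner_right_of_mem_orthogonal (hcmem_l i) hmemj]
        simp [Matrix.fromBlocks]
      | inr i =>
        simp only [Matrix.fromBlocks_apply₂₂, hA₁, Matrix.of_apply, hBsdef,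
          LinearMap.toMatrix_apply, OrthonormalBasis.coe_toBasis,
          OrthonormalBasis.coe_toBasis_repr_apply]
  set Bn : Matrix (Fin n) (Fin n) ℂ :=
    LinearMap.toMatrix c'.toBasis c'.toBasis (Matrix.toEuclideanLin A) with hBndef
  have hBn : Bn = Matrix.reindex e' e' Bs := by
    ext r s
    rw [hBndef, LinearMap.toMatrix_apply, Matrix.reindex_apply, Matrix.submatrix_apply,
      hBsdef, LinearMap.toMatrix_apply]
    rw [hc', OrthonormalBasis.reindex_toBasis, Module.Basis.reindex_apply, Module.Basis.repr_reindex_apply]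
  have hchange : A = U * Bn * star U := by
    have hstep : U * Bn * (c'.toBasis.toMatrix b₀.toBasis)
        = LinearMap.toMatrix b₀.toBasis b₀.toBasis (Matrix.toEuclideanLin A) :=
      basis_toMatrix_mul_linearMap_toMatrix_mul_basis_toMatrix _ _ _ _ _
    have hA₀ : LinearMap.toMatrix b₀.toBasis b₀.toBasis (Matrix.toEuclideanLin A) = A := by
      rw [Matrix.toEuclideanLin_eq_toLin_orthonormal]
      exact LinearMap.toMatrix_toLin _ _ _
    have hleft : c'.toBasis.toMatrix b₀.toBasis * U = 1 := by
      rw [hUdef]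
      exact Module.Basis.toMatrix_mul_toMatrix_flip _ _
    have hstarU : star U = c'.toBasis.toMatrix b₀.toBasis := by
      have h1 : U * c'.toBasis.toMatrix b₀.toBasis = 1 :=
        mul_eq_one_comm.mp hleft
      calc star U = star U * (U * c'.toBasis.toMatrix b₀.toBasis) := by rw [h1, mul_one]
      _ = (star U * U) * c'.toBasis.toMatrix b₀.toBasis := by rw [mul_assoc]
      _ = c'.toBasis.toMatrix b₀.toBasis := by rw [hUU, one_mul]
    rw [hstarU, hstep, hA₀]
  refine ⟨A₁, e', U, hU, by rw [hchange, hBn, hBs], ?_⟩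
  -- now the matrix S
  set V : Matrix (Fin n) (Fin n) ℂ := star U with hV
  set y : Fin m → (Fin n → ℂ) := fun j => V *ᵥ t j with hy
  have hVU : V * U = 1 := hUU
  have hUV : U * V = 1 := hUU'
  have hBny : ∀ j, Bn *ᵥ y j = (a j : ℂ) • y j := by
    intro j
    have hVA : V * A = Bn * V := by
      rw [hchange, ← mul_assoc, ← mul_assoc, hVU, one_mul]
    calc Bn *ᵥ y j = (Bn * V) *ᵥ t j := Matrix.mulVec_mulVec _ _ _
    _ = (V * A) *ᵥ t j := by rw [hVA]
    _ = V *ᵥ (A *ᵥ t j) := (Matrix.mulVec_mulVec _ _ _).symm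
    _ = V *ᵥ ((a j : ℂ) • t j) := by rw [hAt j]
    _ = (a j : ℂ) • y j := by rw [Matrix.mulVec_smul]
  have hBn' : Bn = V * A * U := by
    rw [hchange]
    simp only [← mul_assoc]
    rw [hVU, one_mul, mul_assoc, hVU, mul_one]
  have hBnH : Bnᴴ = V * Aᴴ * U := by
    rw [hBn']
    simp [hV, Matrix.conjTranspose_mul, Matrix.star_eq_conjTranspose, mul_assoc]
  have hBn2 : Bn * Bnᴴ = V * (A * Aᴴ) * U := by
    rw [hBnH, hBn']
    simp only [← mul_assoc]
    rw [mul_assoc (V * A) U V, hUV, mul_one]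
  have hBn2y : ∀ j, (Bn * Bnᴴ) *ᵥ y j = (a j : ℂ) • y j := by
    intro j
    calc (Bn * Bnᴴ) *ᵥ y j = ((Bn * Bnᴴ) * V) *ᵥ t j := Matrix.mulVec_mulVec _ _ _
    _ = (V * (A * Aᴴ)) *ᵥ t j := by
          rw [hBn2, mul_assoc (V * (A * Aᴴ)) U V, hUV, mul_one]
    _ = V *ᵥ ((A * Aᴴ) *ᵥ t j) := (Matrix.mulVec_mulVec _ _ _).symm
    _ = V *ᵥ ((a j : ℂ) • t j) := by rw [hAAt j]
    _ = (a j : ℂ) • y j := by rw [Matrix.mulVec_smul]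
  set z : Fin m → (Fin p ⊕ Fin (n - p)) → ℂ := fun j i => y j (e' i) with hz
  have hre : ∀ (C : Matrix (Fin p ⊕ Fin (n - p)) (Fin p ⊕ Fin (n - p)) ℂ)
      (v : Fin n → ℂ) (i : Fin p ⊕ Fin (n - p)),
      ((Matrix.reindex e' e' C) *ᵥ v) (e' i) = (C *ᵥ (fun k => v (e' k))) i := by
    intro C v i
    rw [Matrix.reindex_apply]
    simp only [Matrix.mulVec, dotProduct, Matrix.submatrix_apply,
      Equiv.symm_apply_apply]
    exact (Fintype.sum_equiv e' _ _ (fun k => by rw [Equiv.symm_apply_apply])).symm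
  have hsum : ∀ (j : Fin m) (A₂ : Matrix (Fin (n - p)) (Fin (n - p)) ℂ) (v : Fin n → ℂ),
      (Matrix.reindex e' e' (Matrix.fromBlocks 1 0 0 A₂)) *ᵥ v = (a j : ℂ) • v →
      (∀ i, v (e' (Sum.inl i)) = 0) ∧
        A₂ *ᵥ (fun i => v (e' (Sum.inr i))) = (a j : ℂ) • (fun i => v (e' (Sum.inr i))) := by
    intro j A₂ v hv
    have hcomp : ∀ k, ((Matrix.fromBlocks 1 0 0 A₂) *ᵥ (fun k => v (e' k))) k
        = (a j : ℂ) * v (e' k) := by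
      intro k
      rw [← hre, hv]
      simp
    constructor
    · intro i
      have h1 := hcomp (Sum.inl i)
      rw [Matrix.fromBlocks_mulVec] at h1
      simp only [Sum.elim_inl, Matrix.one_mulVec, Matrix.zero_mulVec, add_zero,
        Pi.add_apply, Function.comp] at h1
      have h2 : (1 - (a j : ℂ)) * v (e' (Sum.inl i)) = 0 := by linear_combination h1
      exact (mul_eq_zero.mp h2).resolve_left (sub_ne_zero.mpr ((haj1 j).symm))
    · funext i
      have h1 := hcomp (Sum.inr i)
      rw [Matrix.fromBlocks_mulVec] at h1
      simp only [Sum.elim_inr, Matrix.zero_mulVec, zero_add, Pi.add_apply,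
        Function.comp] at h1
      exact h1
  have hvBn : ∀ j, (Matrix.reindex e' e' (Matrix.fromBlocks 1 0 0 A₁)) *ᵥ y j
      = (a j : ℂ) • y j := by
    intro j; rw [← hBs, ← hBn]; exact hBny j
  have hvBn2 : ∀ j, (Matrix.reindex e' e' (Matrix.fromBlocks 1 0 0 (A₁ * A₁ᴴ))) *ᵥ y j
      = (a j : ℂ) • y j := by
    intro j
    have hBB : Bn * Bnᴴ = Matrix.reindex e' e' (Matrix.fromBlocks 1 0 0 (A₁ * A₁ᴴ)) := by
      rw [hBn, hBs, Matrix.reindex_apply, Matrix.reindex_apply,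
        Matrix.conjTranspose_submatrix, Matrix.submatrix_mul_equiv]
      congr 1
      simp [Matrix.fromBlocks_conjTranspose, Matrix.fromBlocks_multiply]
    rw [← hBB]; exact hBn2y j
  have hzl : ∀ j i, z j (Sum.inl i) = 0 := fun j => (hsum j A₁ (y j) (hvBn j)).1
  have hzr : ∀ j, A₁ *ᵥ (fun i => z j (Sum.inr i)) = (a j : ℂ) • (fun i => z j (Sum.inr i)) :=
    fun j => (hsum j A₁ (y j) (hvBn j)).2
  have hzr2 : ∀ j, (A₁ * A₁ᴴ) *ᵥ (fun i => z j (Sum.inr i))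
      = (a j : ℂ) • (fun i => z j (Sum.inr i)) :=
    fun j => (hsum j (A₁ * A₁ᴴ) (y j) (hvBn2 j)).2
  set S : Matrix (Fin (n - p)) (Fin m) ℂ := Matrix.of (fun i j => z j (Sum.inr i)) with hS
  have htli : LinearIndependent ℂ t := by
    have hTcols : LinearIndependent ℂ (fun k : Fin n => Tᵀ k) :=
      Matrix.linearIndependent_cols_iff_isUnit.mpr hT
    have hinj : Function.Injective (fun j : Fin m => e (Sum.inr (Sum.inr j))) :=
      e.injective.comp (Sum.inr_injective.comp Sum.inr_injective)
    exact hTcols.comp _ hinj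
  have hVunit : IsUnit V := ⟨⟨V, U, hVU, hUV⟩, rfl⟩
  have hyli : LinearIndependent ℂ y := by
    have hker : LinearMap.ker (Matrix.mulVecLin V) = ⊥ :=
      LinearMap.ker_eq_bot.mpr (Matrix.mulVec_injective_iff_isUnit.mpr hVunit)
    exact htli.map' (Matrix.mulVecLin V) hker
  set zr : Fin m → (Fin (n - p) → ℂ) := fun j i => z j (Sum.inr i) with hzrdef
  let X : (Fin (n - p) → ℂ) →ₗ[ℂ] (Fin n → ℂ) :=
    { toFun := fun u r => Sum.elim (fun _ => (0 : ℂ)) u (e'.symm r),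
      map_add' := by intro u v; funext r; cases h : e'.symm r <;> simp [h],
      map_smul' := by intro cst u; funext r; cases h : e'.symm r <;> simp [h] }
  have hXz : ∀ j, X (zr j) = y j := by
    intro j
    funext r
    obtain ⟨i, rfl⟩ : ∃ i, e' i = r := ⟨e'.symm r, e'.apply_symm_apply r⟩
    cases i with
    | inl i =>
      show Sum.elim _ _ (e'.symm (e' (Sum.inl i))) = y j (e' (Sum.inl i))
      rw [Equiv.symm_apply_apply]
      exact (hzl j i).symm
    | inr i =>
      show Sum.elim _ _ (e'.symm (e' (Sum.inr i))) = y j (e' (Sum.inr i))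
      rw [Equiv.symm_apply_apply]
      rfl
  have hzrli : LinearIndependent ℂ zr := by
    apply LinearIndependent.of_comp X
    have hcompeq : (⇑X ∘ zr) = y := funext hXz
    rw [hcompeq]
    exact hyli
  have hrank : S.rank = m := by
    have hSz : S.col = Matrix.of zr := by
      ext j i
      rfl
    rw [Matrix.rank_eq_finrank_span_cols, hSz]
    have hr2 : Set.range (Matrix.of zr) = Set.range zr := rfl
    rw [hr2, finrank_span_eq_card hzrli, Fintype.card_fin]
  refine ⟨S, hrank, ?_, ?_⟩
  · ext i j
    rw [Matrix.mul_diagonal]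
    have h := congrFun (hzr2 j) i
    simp only [Pi.smul_apply, smul_eq_mul] at h
    have hL : (A₁ * A₁ᴴ * S) i j = ((A₁ * A₁ᴴ) *ᵥ (fun i => z j (Sum.inr i))) i := by
      simp only [Matrix.mul_apply, Matrix.mulVec, dotProduct, hS, Matrix.of_apply]
    rw [hL, h, hS, Matrix.of_apply]
    exact mul_comm _ _
  · ext i j
    rw [Matrix.mul_diagonal]
    have h := congrFun (hzr j) i
    simp only [Pi.smul_apply, smul_eq_mul] at h
    have hL : (A₁ * S) i j = (A₁ *ᵥ (fun i => z j (Sum.inr i))) i := by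
      simp only [Matrix.mul_apply, Matrix.mulVec, dotProduct, hS, Matrix.of_apply]
    rw [hL, h, hS, Matrix.of_apply]
    exact mul_comm _ _
end

section
/- Let A = [[A₁₁, A₁₂],[0, 0_{n−m}]] ∈ M_n where A₁₁ ∈ M_m is similar to D = diag(a₁,…,a_m) with 1 > a₁ ≥ … ≥ a_m > 0. If there exists an invertible contraction U₁₁ ∈ M_m with A₁₁U₁₁ = U₁₁D and U₁₁DU₁₁* ⪰ A₁₁A₁₁* + A₁₂A₁₂*, then A = PQ where P = [[U₁₁U₁₁*, 0],[0, 0_{n−m}]] and Q = [[(U₁₁*)⁻¹DU₁₁⁻¹, (U₁₁U₁₁*)⁻¹A₁₂],[A₁₂*(U₁₁U₁₁*)⁻¹, A₁₂*(U₁₁DU₁₁*)⁻¹A₁₂]] are positive semidefinite contractions. -/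
open scoped ComplexOrder Matrix

open scoped Matrix.Norms.L2Operator

open scoped MatrixOrder in
private lemma aux_sqrt {n : Type*} [Fintype n] [DecidableEq n]
    {C : Matrix n n ℂ} (hC : C.PosSemidef) : ∃ R : Matrix n n ℂ, R * R = C ∧ R.PosSemidef :=
  ⟨CFC.sqrt C, CFC.sqrt_mul_sqrt_self C hC.nonneg, Matrix.nonneg_iff_posSemidef.mp (CFC.sqrt_nonneg C)⟩

open Matrix in
private lemma aux_norm_le_one {n : Type*} [Fintype n] [DecidableEq n]
    {C : Matrix n n ℂ} (hC : C.PosSemidef) (h1 : (1 - C).PosSemidef) : ‖C‖ ≤ 1 := by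
  rw [Matrix.cstar_norm_def]
  refine ContinuousLinearMap.opNorm_le_bound _ zero_le_one fun x => ?_
  rw [one_mul]
  set y : n → ℂ := WithLp.equiv 2 _ x with hy
  obtain ⟨R, hRC, hRpsd⟩ : ∃ R : Matrix n n ℂ, R * R = C ∧ R.PosSemidef :=
    aux_sqrt hC
  have hCC : (C - C * C).PosSemidef := by
    have h3 : R * C * R = C * C := by
      rw [← hRC]; simp only [Matrix.mul_assoc]
    have h2 : R * (1 - C) * Rᴴ = C - C * C := by
      rw [hRpsd.1, Matrix.mul_sub, Matrix.mul_one, Matrix.sub_mul, hRC, h3]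
    exact h2 ▸ h1.mul_mul_conjTranspose_same R
  have e1 : star (C *ᵥ y) ⬝ᵥ (C *ᵥ y) = star y ⬝ᵥ ((C * C) *ᵥ y) := by
    rw [Matrix.star_mulVec, Matrix.dotProduct_mulVec, Matrix.vecMul_vecMul,
      ← Matrix.dotProduct_mulVec, hC.1]
  have le1 : star y ⬝ᵥ ((C * C) *ᵥ y) ≤ star y ⬝ᵥ (C *ᵥ y) := by
    have h4 := hCC.dotProduct_mulVec_nonneg y
    rw [Matrix.sub_mulVec, dotProduct_sub] at h4
    exact sub_nonneg.mp h4
  have le2 : star y ⬝ᵥ (C *ᵥ y) ≤ star y ⬝ᵥ y := by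
    have h4 := h1.dotProduct_mulVec_nonneg y
    rw [Matrix.sub_mulVec, Matrix.one_mulVec, dotProduct_sub] at h4
    exact sub_nonneg.mp h4
  have key : star (C *ᵥ y) ⬝ᵥ (C *ᵥ y) ≤ star y ⬝ᵥ y := e1 ▸ le1.trans le2
  have hv : (inner ℂ (toEuclideanCLM (𝕜 := ℂ) C x) (toEuclideanCLM (𝕜 := ℂ) C x) : ℂ)
      = star (C *ᵥ y) ⬝ᵥ (C *ᵥ y) := by
    rw [EuclideanSpace.inner_eq_star_dotProduct, Matrix.ofLp_toEuclideanCLM,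
      dotProduct_comm]; rfl
  have hx : (inner ℂ x x : ℂ) = star y ⬝ᵥ y := by
    rw [EuclideanSpace.inner_eq_star_dotProduct, hy, dotProduct_comm]; rfl
  have hsq : ‖toEuclideanCLM (𝕜 := ℂ) C x‖ ^ 2 ≤ ‖x‖ ^ 2 := by
    rw [← inner_self_eq_norm_sq (𝕜 := ℂ), ← inner_self_eq_norm_sq (𝕜 := ℂ)]
    have h6 : (inner ℂ (toEuclideanCLM (𝕜 := ℂ) C x) (toEuclideanCLM (𝕜 := ℂ) C x) : ℂ)
        ≤ (inner ℂ x x : ℂ) := by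
      rw [hv, hx]; exact key
    exact (Complex.le_def.mp h6).1
  nlinarith [norm_nonneg (toEuclideanCLM (𝕜 := ℂ) C x), norm_nonneg x]

/-- With A = [[A₁₁,A₁₂],[0,0]], A₁₁ similar to D = diag(a₁ ≥ … ≥ a_m) ⊆ (0,1),
if there is an invertible contraction U₁₁ with A₁₁U₁₁ = U₁₁D and
U₁₁DU₁₁* ⪰ A₁₁A₁₁* + A₁₂A₁₂*, then A = PQ for explicit positive semidefinite contractions
P and Q. -/
theorem stmt12 (m k : ℕ) (A₁₁ : Matrix (Fin m) (Fin m) ℂ) (A₁₂ : Matrix (Fin m) (Fin k) ℂ)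
    (a : Fin m → ℝ) (ha : ∀ i, 0 < a i ∧ a i < 1) (hmono : Antitone a)
    (D : Matrix (Fin m) (Fin m) ℂ) (hD : D = Matrix.diagonal fun i => (a i : ℂ))
    (hsim : ∃ S : Matrix (Fin m) (Fin m) ℂ, IsUnit S ∧ A₁₁ = S * D * S⁻¹)
    (U₁₁ : Matrix (Fin m) (Fin m) ℂ) (hU : IsUnit U₁₁) (hU1 : ‖U₁₁‖ ≤ 1)
    (hcomm : A₁₁ * U₁₁ = U₁₁ * D)
    (hloew : (U₁₁ * D * U₁₁ᴴ - (A₁₁ * A₁₁ᴴ + A₁₂ * A₁₂ᴴ)).PosSemidef) :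
    let P : Matrix (Fin m ⊕ Fin k) (Fin m ⊕ Fin k) ℂ :=
      Matrix.fromBlocks (U₁₁ * U₁₁ᴴ) 0 0 0
    let Q : Matrix (Fin m ⊕ Fin k) (Fin m ⊕ Fin k) ℂ :=
      Matrix.fromBlocks ((U₁₁ᴴ)⁻¹ * D * U₁₁⁻¹) ((U₁₁ * U₁₁ᴴ)⁻¹ * A₁₂)
        (A₁₂ᴴ * (U₁₁ * U₁₁ᴴ)⁻¹) (A₁₂ᴴ * (U₁₁ * D * U₁₁ᴴ)⁻¹ * A₁₂)
    P.PosSemidef ∧ ‖P‖ ≤ 1 ∧ Q.PosSemidef ∧ ‖Q‖ ≤ 1 ∧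
      Matrix.fromBlocks A₁₁ A₁₂ 0 0 = P * Q := by
  intro P Q
  letI instU : Invertible U₁₁ := hU.invertible
  have hdetD : IsUnit D.det := by
    rw [hD, Matrix.det_diagonal]
    refine isUnit_iff_ne_zero.mpr (Finset.prod_ne_zero_iff.mpr fun i _ => ?_)
    exact_mod_cast (ha i).1.ne'
  letI instD : Invertible D := D.invertibleOfIsUnitDet hdetD
  have hDH : Dᴴ = D := by
    have hst : (star fun i => ((a i : ℂ))) = fun i => ((a i : ℂ)) :=
      funext fun i => Complex.conj_ofReal (a i)
    rw [hD, Matrix.diagonal_conjTranspose, hst]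
  have hA : A₁₁ = U₁₁ * D * U₁₁⁻¹ := by
    rw [← hcomm, Matrix.mul_inv_cancel_right_of_invertible]
  have hDpsd : D.PosSemidef := by
    rw [hD]
    exact Matrix.PosSemidef.diagonal fun i => Complex.zero_le_real.mpr (ha i).1.le
  have hNpsd : (U₁₁ * D * U₁₁ᴴ).PosSemidef := hDpsd.mul_mul_conjTranspose_same U₁₁
  letI instUD : Invertible (U₁₁ * D) := invertibleMul _ _
  letI instN : Invertible (U₁₁ * D * U₁₁ᴴ) := invertibleMul _ _
  letI instM : Invertible (U₁₁ * U₁₁ᴴ) := invertibleMul _ _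
  obtain ⟨R, hRR, hRpsd'⟩ := aux_sqrt hNpsd
  have hRH : Rᴴ = R := hRpsd'.1
  have hdetR : IsUnit R.det := by
    have h1 : R.det * R.det = (U₁₁ * D * U₁₁ᴴ).det := by rw [← Matrix.det_mul, hRR]
    have h2 : IsUnit (U₁₁ * D * U₁₁ᴴ).det :=
      (Matrix.isUnit_iff_isUnit_det _).mp (isUnit_of_invertible _)
    rw [← h1] at h2
    exact isUnit_of_mul_isUnit_left h2
  letI instR : Invertible R := R.invertibleOfIsUnitDet hdetR
  have hRinvH : R⁻¹ᴴ = R⁻¹ := by rw [Matrix.conjTranspose_nonsing_inv, hRH]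
  have hRiRi : R⁻¹ * R⁻¹ = (U₁₁ * D * U₁₁ᴴ)⁻¹ := by rw [← hRR, Matrix.mul_inv_rev]
  have hA11H : A₁₁ᴴ = (U₁₁ᴴ)⁻¹ * D * U₁₁ᴴ := by
    rw [hA, Matrix.conjTranspose_mul, Matrix.conjTranspose_mul,
      Matrix.conjTranspose_nonsing_inv, hDH, Matrix.mul_assoc]
  have key1 : A₁₁ᴴ * (U₁₁ * D * U₁₁ᴴ)⁻¹ = (U₁₁ * U₁₁ᴴ)⁻¹ := by
    rw [hA11H, Matrix.mul_inv_rev, Matrix.mul_inv_rev, Matrix.mul_inv_rev]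
    simp only [Matrix.mul_assoc, Matrix.mul_inv_cancel_left_of_invertible]
  have hMH : (U₁₁ * U₁₁ᴴ)ᴴ = U₁₁ * U₁₁ᴴ := by
    rw [Matrix.conjTranspose_mul, Matrix.conjTranspose_conjTranspose]
  have key2 : (U₁₁ * D * U₁₁ᴴ)⁻¹ * A₁₁ = (U₁₁ * U₁₁ᴴ)⁻¹ := by
    have h3 := congrArg Matrix.conjTranspose key1
    rwa [Matrix.conjTranspose_mul, Matrix.conjTranspose_nonsing_inv,
      Matrix.conjTranspose_conjTranspose, hNpsd.1, Matrix.conjTranspose_nonsing_inv, hMH] at h3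
  have key3 : (U₁₁ * U₁₁ᴴ)⁻¹ * A₁₁ = (U₁₁ᴴ)⁻¹ * D * U₁₁⁻¹ := by
    rw [Matrix.mul_inv_rev, hA]
    simp only [Matrix.mul_assoc, Matrix.inv_mul_cancel_left_of_invertible]
  -- the factor X with Q = Xᴴ * X
  set X : Matrix (Fin m) (Fin m ⊕ Fin k) ℂ :=
    Matrix.fromCols (R⁻¹ * A₁₁) (R⁻¹ * A₁₂) with hXdef
  have hXH : Xᴴ = Matrix.fromRows (A₁₁ᴴ * R⁻¹) (A₁₂ᴴ * R⁻¹) := by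
    rw [hXdef, Matrix.conjTranspose_fromCols_eq_fromRows_conjTranspose,
      Matrix.conjTranspose_mul, Matrix.conjTranspose_mul, hRinvH]
  have b11 : (A₁₁ᴴ * R⁻¹) * (R⁻¹ * A₁₁) = (U₁₁ᴴ)⁻¹ * D * U₁₁⁻¹ := by
    rw [Matrix.mul_assoc A₁₁ᴴ, ← Matrix.mul_assoc R⁻¹ R⁻¹, hRiRi, ← Matrix.mul_assoc,
      key1, key3]
  have b12 : (A₁₁ᴴ * R⁻¹) * (R⁻¹ * A₁₂) = (U₁₁ * U₁₁ᴴ)⁻¹ * A₁₂ := by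
    rw [Matrix.mul_assoc A₁₁ᴴ, ← Matrix.mul_assoc R⁻¹ R⁻¹, hRiRi, ← Matrix.mul_assoc, key1]
  have b21 : (A₁₂ᴴ * R⁻¹) * (R⁻¹ * A₁₁) = A₁₂ᴴ * (U₁₁ * U₁₁ᴴ)⁻¹ := by
    rw [Matrix.mul_assoc A₁₂ᴴ, ← Matrix.mul_assoc R⁻¹ R⁻¹, hRiRi, key2]
  have b22 : (A₁₂ᴴ * R⁻¹) * (R⁻¹ * A₁₂) = A₁₂ᴴ * (U₁₁ * D * U₁₁ᴴ)⁻¹ * A₁₂ := by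
    rw [Matrix.mul_assoc A₁₂ᴴ, ← Matrix.mul_assoc R⁻¹ R⁻¹, hRiRi, ← Matrix.mul_assoc]
  have hQ : Q = Xᴴ * X := by
    show Matrix.fromBlocks _ _ _ _ = _
    rw [hXH, hXdef, Matrix.fromRows_mul_fromCols, b11, b12, b21, b22]
  -- the factor Z with P = Z * Zᴴ
  set Z : Matrix (Fin m ⊕ Fin k) (Fin m) ℂ :=
    Matrix.fromRows U₁₁ (0 : Matrix (Fin k) (Fin m) ℂ) with hZdef
  have hZH : Zᴴ = Matrix.fromCols U₁₁ᴴ 0 := by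
    rw [hZdef, Matrix.conjTranspose_fromRows_eq_fromCols_conjTranspose,
      Matrix.conjTranspose_zero]
  have hP : P = Z * Zᴴ := by
    show Matrix.fromBlocks _ _ _ _ = _
    rw [hZH, hZdef, Matrix.fromRows_mul_fromCols, Matrix.mul_zero, Matrix.zero_mul,
      Matrix.zero_mul]
  refine ⟨?_, ?_, ?_, ?_, ?_⟩
  · rw [hP, ← Matrix.conjTranspose_conjTranspose Z]
    exact Matrix.posSemidef_self_mul_conjTranspose _
  · have e0 : Z * Zᴴ = Zᴴᴴ * Zᴴ := by rw [Matrix.conjTranspose_conjTranspose]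
    have e2 : Zᴴ * Z = U₁₁ᴴ * U₁₁ := by
      rw [hZH, hZdef, Matrix.fromCols_mul_fromRows, Matrix.zero_mul, add_zero]
    have e3 : ‖P‖ = ‖U₁₁‖ * ‖U₁₁‖ := by
      rw [hP, e0, Matrix.l2_opNorm_conjTranspose_mul_self, Matrix.l2_opNorm_conjTranspose,
        ← Matrix.l2_opNorm_conjTranspose_mul_self Z, e2,
        Matrix.l2_opNorm_conjTranspose_mul_self]
    rw [e3]
    nlinarith [norm_nonneg U₁₁]
  · rw [hQ]
    exact Matrix.posSemidef_conjTranspose_mul_self _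
  · have hXXH : X * Xᴴ = R⁻¹ * (A₁₁ * A₁₁ᴴ + A₁₂ * A₁₂ᴴ) * R⁻¹ := by
      rw [hXH, hXdef, Matrix.fromCols_mul_fromRows]
      simp only [Matrix.mul_add, Matrix.add_mul, Matrix.mul_assoc]
    have hG1 : (X * Xᴴ).PosSemidef := by
      rw [← Matrix.conjTranspose_conjTranspose X]
      exact Matrix.posSemidef_self_mul_conjTranspose _
    have hG2 : (1 - X * Xᴴ).PosSemidef := by
      have hc : R⁻¹ * (U₁₁ * D * U₁₁ᴴ - (A₁₁ * A₁₁ᴴ + A₁₂ * A₁₂ᴴ)) * (R⁻¹)ᴴ = 1 - X * Xᴴ := by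
        rw [hRinvH, hXXH, Matrix.mul_sub, Matrix.sub_mul]
        congr 1
        rw [← hRR, Matrix.inv_mul_cancel_left_of_invertible, Matrix.mul_inv_of_invertible]
      exact hc ▸ hloew.mul_mul_conjTranspose_same R⁻¹
    have hGnorm : ‖X * Xᴴ‖ ≤ 1 := aux_norm_le_one hG1 hG2
    have e4 : ‖Q‖ = ‖X * Xᴴ‖ := by
      rw [hQ, Matrix.l2_opNorm_conjTranspose_mul_self, ← Matrix.l2_opNorm_conjTranspose X,
        ← Matrix.l2_opNorm_conjTranspose_mul_self Xᴴ, Matrix.conjTranspose_conjTranspose]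
    rw [e4]; exact hGnorm
  · have c1 : (U₁₁ * U₁₁ᴴ) * ((U₁₁ᴴ)⁻¹ * D * U₁₁⁻¹) = A₁₁ := by
      rw [hA]
      simp only [Matrix.mul_assoc, Matrix.mul_inv_cancel_left_of_invertible]
    have c2 : (U₁₁ * U₁₁ᴴ) * ((U₁₁ * U₁₁ᴴ)⁻¹ * A₁₂) = A₁₂ :=
      Matrix.mul_inv_cancel_left_of_invertible _ _
    show Matrix.fromBlocks A₁₁ A₁₂ 0 0 =
      Matrix.fromBlocks (U₁₁ * U₁₁ᴴ) 0 0 0 * Matrix.fromBlocks ((U₁₁ᴴ)⁻¹ * D * U₁₁⁻¹)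
        ((U₁₁ * U₁₁ᴴ)⁻¹ * A₁₂) (A₁₂ᴴ * (U₁₁ * U₁₁ᴴ)⁻¹) (A₁₂ᴴ * (U₁₁ * D * U₁₁ᴴ)⁻¹ * A₁₂)
    rw [Matrix.fromBlocks_multiply]
    simp only [Matrix.zero_mul, Matrix.mul_zero, add_zero, zero_add, c1, c2]
end

section
/- Let G be an m×m Hermitian matrix and M an m×m Hermitian matrix. Then the nearest matrix (in Frobenius norm) to G in the set {Γ Hermitian : M ⪰ Γ} is M − (M−G)⁺, where X⁺ = (X + √(X²))/2 denotes the positive semidefinite part of a Hermitian matrix X. -/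
open scoped ComplexOrder Matrix
open Matrix

lemma psd_trace_re_nonneg {n : ℕ} {P : Matrix (Fin n) (Fin n) ℂ} (hP : P.PosSemidef) :
    0 ≤ (P.trace).re := by
  have h : ∀ i, 0 ≤ P i i := fun i => by
    exact hP.diag_nonneg
  rw [Matrix.trace, Complex.re_sum]
  exact Finset.sum_nonneg fun i _ => (Complex.le_def.mp (h i)).1

open scoped MatrixOrder in
lemma trace_mul_psd_re_nonneg {n : ℕ} {B N : Matrix (Fin n) (Fin n) ℂ} (hB : B.PosSemidef)
    (hN : N.PosSemidef) : 0 ≤ ((B * N).trace).re := by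
  have h1 : (B * N).trace = (CFC.sqrt N * B * CFC.sqrt N).trace := by
    conv_lhs => rw [← CFC.sqrt_mul_sqrt_self N (nonneg_iff_posSemidef.mpr hN)]
    rw [← Matrix.mul_assoc, Matrix.trace_mul_comm, Matrix.mul_assoc]
  rw [h1]
  have h2 := hB.mul_mul_conjTranspose_same (m := Fin n) (CFC.sqrt N)
  rw [(nonneg_iff_posSemidef.mp (CFC.sqrt_nonneg N)).1] at h2
  exact psd_trace_re_nonneg h2

lemma fro_eq {n : ℕ} (X : Matrix (Fin n) (Fin n) ℂ) :
    (∑ i, ∑ j, ‖X i j‖ ^ 2) = ((X * Xᴴ).trace).re := by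
  simp only [Matrix.trace, Matrix.diag, Matrix.mul_apply, Matrix.conjTranspose_apply,
    Complex.re_sum, Complex.mul_conj, Complex.ofReal_re, Complex.normSq_eq_norm_sq,
    Complex.star_def]

/-- For Hermitian G and M, the nearest matrix (in Frobenius norm) to G in
{Γ Hermitian : M ⪰ Γ} is M − (M−G)⁺, where X⁺ = (X + √(X²))/2.  Here S is the unique
positive semidefinite square root of (M−G)². -/
theorem stmt18 (m : ℕ) (G M : Matrix (Fin m) (Fin m) ℂ)
    (hG : G.IsHermitian) (hM : M.IsHermitian)
    (S : Matrix (Fin m) (Fin m) ℂ) (hS : S.PosSemidef)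
    (hS2 : S * S = (M - G) * (M - G)) :
    IsLeast {r : ℝ | ∃ Γ : Matrix (Fin m) (Fin m) ℂ, Γ.IsHermitian ∧ (M - Γ).PosSemidef ∧
        r = Real.sqrt (∑ i, ∑ j, ‖(G - Γ) i j‖ ^ 2)}
      (Real.sqrt (∑ i, ∑ j,
        ‖(G - (M - (2⁻¹ : ℂ) • ((M - G) + S))) i j‖ ^ 2)) := by
  have hA : (M - G).IsHermitian := hM.sub hG
  set U : Matrix (Fin m) (Fin m) ℂ := (hA.eigenvectorUnitary : Matrix (Fin m) (Fin m) ℂ)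
    with hUdef
  have hUU : star U * U = 1 :=
    Matrix.mem_unitaryGroup_iff'.mp (hA.eigenvectorUnitary).2
  set ev : Fin m → ℝ := hA.eigenvalues with hevdef
  have hAspec : M - G = U * diagonal (fun i => (ev i : ℂ)) * star U := hA.spectral_theorem
  have key : ∀ d e : Fin m → ℂ, (U * diagonal d * star U) * (U * diagonal e * star U)
      = U * diagonal (fun i => d i * e i) * star U := by
    intro d e
    simp only [Matrix.mul_assoc]
    rw [← Matrix.mul_assoc (star U) U, hUU, Matrix.one_mul,
      ← Matrix.mul_assoc (diagonal d), Matrix.diagonal_mul_diagonal]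
  have psdconj : ∀ d : Fin m → ℝ, (∀ i, 0 ≤ d i) →
      (U * diagonal (fun i => (d i : ℂ)) * star U).PosSemidef := by
    intro d hd
    have h0 : (0 : Fin m → ℂ) ≤ fun i => (d i : ℂ) := fun i => by
      simpa using Complex.zero_le_real.mpr (hd i)
    have := (Matrix.PosSemidef.diagonal h0).mul_mul_conjTranspose_same U
    simpa [Matrix.star_eq_conjTranspose] using this
  have hT : (U * diagonal (fun i => ((|ev i| : ℝ) : ℂ)) * star U).PosSemidef :=
    psdconj _ (fun i => abs_nonneg _)
  have hST : S = U * diagonal (fun i => ((|ev i| : ℝ) : ℂ)) * star U := by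
    open scoped MatrixOrder in apply (CFC.sq_eq_sq_iff S _ (nonneg_iff_posSemidef.mpr hS) (nonneg_iff_posSemidef.mpr hT)).mp
    rw [pow_two, pow_two, hS2, key]
    conv_lhs => rw [hAspec, key]
    have : (fun i => (ev i : ℂ) * (ev i : ℂ)) = fun i => ((|ev i| : ℝ) : ℂ) * ((|ev i| : ℝ) : ℂ) := by
      funext i
      rw [← Complex.ofReal_mul, ← Complex.ofReal_mul, abs_mul_abs_self]
    rw [this]
  -- diagonal representations of the positive and negative parts
  have smuldiag : ∀ (d : Fin m → ℂ), (2⁻¹ : ℂ) • (U * diagonal d * star U)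
      = U * diagonal (fun i => (2⁻¹ : ℂ) * d i) * star U := by
    intro d
    rw [show (fun i => (2⁻¹ : ℂ) * d i) = (2⁻¹ : ℂ) • d from rfl, Matrix.diagonal_smul,
      Matrix.mul_smul, Matrix.smul_mul]
  have hAplus : (2⁻¹ : ℂ) • ((M - G) + S)
      = U * diagonal (fun i => (((ev i + |ev i|) / 2 : ℝ) : ℂ)) * star U := by
    rw [hAspec, hST, ← Matrix.add_mul, ← Matrix.mul_add, Matrix.diagonal_add, smuldiag,
      show (fun i => (2⁻¹ : ℂ) * ((ev i : ℂ) + ((|ev i| : ℝ) : ℂ)))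
          = fun i => (((ev i + |ev i|) / 2 : ℝ) : ℂ) from funext fun i => by push_cast; ring]
  have hNmat : (2⁻¹ : ℂ) • (S - (M - G))
      = U * diagonal (fun i => (((|ev i| - ev i) / 2 : ℝ) : ℂ)) * star U := by
    rw [hAspec, hST, ← Matrix.sub_mul, ← Matrix.mul_sub, Matrix.diagonal_sub, smuldiag,
      show (fun i => (2⁻¹ : ℂ) * (((|ev i| : ℝ) : ℂ) - (ev i : ℂ)))
          = fun i => (((|ev i| - ev i) / 2 : ℝ) : ℂ) from funext fun i => by push_cast; ring]
  have hAplusPSD : ((2⁻¹ : ℂ) • ((M - G) + S)).PosSemidef := by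
    rw [hAplus]
    exact psdconj _ (fun i => by have := neg_abs_le (ev i); linarith)
  have hNpsd : ((2⁻¹ : ℂ) • (S - (M - G))).PosSemidef := by
    rw [hNmat]
    refine psdconj _ (fun i => ?_)
    have := le_abs_self (ev i)
    linarith
  have prodzero : ((2⁻¹ : ℂ) • ((M - G) + S)) * ((2⁻¹ : ℂ) • (S - (M - G))) = 0 := by
    rw [hAplus, hNmat, key]
    have : (fun i => (((ev i + |ev i|) / 2 : ℝ) : ℂ) * (((|ev i| - ev i) / 2 : ℝ) : ℂ))
        = fun _ => (0 : ℂ) := by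
      funext i
      rw [← Complex.ofReal_mul]
      have : (ev i + |ev i|) / 2 * ((|ev i| - ev i) / 2)
          = (|ev i| * |ev i| - ev i * ev i) / 4 := by ring
      rw [this, abs_mul_abs_self, sub_self, zero_div, Complex.ofReal_zero]
    rw [this, Matrix.diagonal_zero, Matrix.mul_zero, Matrix.zero_mul]
  have hGsub : G - (M - (2⁻¹ : ℂ) • ((M - G) + S)) = (2⁻¹ : ℂ) • (S - (M - G)) := by
    module
  constructor
  · exact ⟨M - (2⁻¹ : ℂ) • ((M - G) + S), hM.sub hAplusPSD.isHermitian,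
      by rw [sub_sub_cancel]; exact hAplusPSD, rfl⟩
  · rintro r ⟨Γ, hΓ, hBpsd, rfl⟩
    apply Real.sqrt_le_sqrt
    rw [hGsub]
    set N := (2⁻¹ : ℂ) • (S - (M - G)) with hNdef
    set B := M - Γ with hBdef
    set D := B - (2⁻¹ : ℂ) • ((M - G) + S) with hDdef
    have hCherm : (G - Γ).IsHermitian := hG.sub hΓ
    have hC : G - Γ = D + N := by rw [hDdef, hNdef, hBdef]; module
    have hDN : D * N = B * N := by
      rw [hDdef, Matrix.sub_mul, prodzero, sub_zero]
    have expand : (((G - Γ) * (G - Γ)).trace).re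
        = ((D * D).trace).re + 2 * ((B * N).trace).re + ((N * N).trace).re := by
      rw [hC, Matrix.add_mul, Matrix.mul_add, Matrix.mul_add, Matrix.trace_add,
        Matrix.trace_add, Matrix.trace_add, Matrix.trace_mul_comm N D, hDN]
      simp only [Complex.add_re]
      ring
    have hfroC : (∑ i, ∑ j, ‖(G - Γ) i j‖ ^ 2) = (((G - Γ) * (G - Γ)).trace).re := by
      rw [fro_eq, hCherm.eq]
    have hfroN : (∑ i, ∑ j, ‖N i j‖ ^ 2) = ((N * N).trace).re := by
      rw [fro_eq, hNpsd.isHermitian.eq]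
    have hDD : 0 ≤ ((D * D).trace).re := by
      have hDherm : D.IsHermitian := (hM.sub hΓ).sub hAplusPSD.isHermitian
      have := fro_eq D
      rw [hDherm.eq] at this
      rw [← this]
      positivity
    have hBN : 0 ≤ ((B * N).trace).re := trace_mul_psd_re_nonneg hBpsd hNpsd
    rw [hfroC, hfroN, expand]
    linarith
end
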